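/- arXiv:1711.10239 — 4 statements merged into one kernel-verified Lean document; each statement's English description precedes it below -/
import Mathlib

section
/- The recursive inner product on decorated trees is diagonal with symmetry factors: for all τ, τ̄ ∈ 𝒱 one has ⟨τ, τ̄⟩ = δ_{τ,τ̄}·S(τ), where ⟨·,·⟩ is the recursively defined inner product on 𝕍 and S is the symmetry factor defined recursively by S(Ξ_𝔩 X^k ∏_{j=1}^m 𝓘_{o_j}[τ_j]^{β_j}) := k!·∏_{j=1}^m S(τ_j)^{β_j}·β_j!, the terms being grouped so that the pairs (o_j,τ_j) are pairwise distinct. -/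
/-
Common framework: multi-indices, the algebra of smooth functions on ℝ^𝒪,
and the spaces of decorated trees 𝒱 and 𝔅 of [Bruned–Chandra–Chevyrev–Hairer,
"Renormalising SPDEs in regularity structures"], presented abstractly together
with the defining recursions of the various operators on them.
-/

open scoped BigOperators Classical

namespace SPDERenorm

/-! ### Multi-indices in `ℕ^{d+1}` -/

abbrev MIdx (d : ℕ) := Fin (d+1) → ℕ

/-- `k! = ∏ᵢ k[i]!`. -/
def mfact {d : ℕ} (k : MIdx d) : ℕ := ∏ i, Nat.factorial (k i)

/-- `C(k,ℓ) = ∏ᵢ binom(k[i], ℓ[i])`. -/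
def mchoose {d : ℕ} (k l : MIdx d) : ℕ := ∏ i, Nat.choose (k i) (l i)

/-- `|k| = Σᵢ k[i]`. -/
def msize {d : ℕ} (k : MIdx d) : ℕ := ∑ i, k i

/-- The unit multi-index `e_i`. -/
def munit {d : ℕ} (i : Fin (d+1)) : MIdx d := Pi.single i 1

/-- Sum of `f ℓ` over all multi-indices `ℓ ≤ m` (componentwise). -/
noncomputable def msum {d : ℕ} {A : Type*} [AddCommMonoid A] (m : MIdx d) (f : MIdx d → A) : A :=
  ∑ e : (∀ i : Fin (d+1), Fin (m i + 1)), f fun i => (e i : ℕ)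

/-- The scaled size `|k|_𝔰 = Σᵢ k[i]·𝔰ᵢ`. -/
noncomputable def wdeg {d : ℕ} (s : Fin (d+1) → ℝ) (k : MIdx d) : ℝ := ∑ i, (k i : ℝ) * s i

/-- The index set `𝒪 = 𝔏₊ × ℕ^{d+1}`. -/
abbrev Odx (Lp : Type) (d : ℕ) := Lp × MIdx d

/-! ### Functions on `ℝ^𝒪` and differential operators -/

/-- Real-valued functions on `ℝ^𝒪`. -/
abbrev FnO (Lp : Type) (d : ℕ) := (Odx Lp d → ℝ) → ℝ

/-- The coordinate function `𝒳_o`. -/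
def Xc {Lp : Type} {d : ℕ} (o : Odx Lp d) : FnO Lp d := fun x => x o

/-- The partial derivative `D_o` in the `o`-th coordinate. -/
noncomputable def Dpart {Lp : Type} {d : ℕ} [DecidableEq Lp] (o : Odx Lp d) (F : FnO Lp d) :
    FnO Lp d :=
  fun x => deriv (fun t : ℝ => F (Function.update x o t)) (x o)

/-- Iterated partial derivatives `D_{o₁} ∘ ⋯ ∘ D_{oₙ}` over a list. -/
noncomputable def Dlist {Lp : Type} {d : ℕ} [DecidableEq Lp] (L : List (Odx Lp d))
    (F : FnO Lp d) : FnO Lp d :=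
  L.foldr Dpart F

/-- The derivation `∂_i F = Σ_{(𝔱,p)} 𝒳_{(𝔱,p+e_i)} · D_{(𝔱,p)} F`. -/
noncomputable def pderivO {Lp : Type} {d : ℕ} [DecidableEq Lp] (i : Fin (d+1)) (F : FnO Lp d) :
    FnO Lp d :=
  fun x => ∑ᶠ o : Odx Lp d, Xc (o.1, o.2 + munit i) x * Dpart o F x

/-- `∂^k = ∏ᵢ ∂ᵢ^{k[i]}`. -/
noncomputable def mpderiv {Lp : Type} {d : ℕ} [DecidableEq Lp] (k : MIdx d) (F : FnO Lp d) :
    FnO Lp d :=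
  (List.finRange (d+1)).foldr (fun i G => (pderivO i)^[k i] G) F

/-- `D^α` for a finitely supported `α ∈ ℕ^𝒪`. -/
noncomputable def Dexp {Lp : Type} {d : ℕ} [DecidableEq Lp] (α : Odx Lp d →₀ ℕ)
    (F : FnO Lp d) : FnO Lp d :=
  Dlist (Finsupp.toMultiset α).toList F

/-- `α! = ∏_o α[o]!`. -/
def afact {Lp : Type} {d : ℕ} (α : Odx Lp d →₀ ℕ) : ℕ := α.prod fun _ n => Nat.factorial n

/-- The monomial `𝒳^α`. -/
noncomputable def Xpow {Lp : Type} {d : ℕ} (α : Odx Lp d →₀ ℕ) : FnO Lp d :=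
  fun x => α.prod fun o n => x o ^ n

/-- `F` depends only on the coordinates in `s`. -/
def DependsOnlyOn {Lp : Type} {d : ℕ} (F : FnO Lp d) (s : Set (Odx Lp d)) : Prop :=
  ∀ x y, (∀ o ∈ s, x o = y o) → F x = F y

/-- Membership in `𝒞_𝒪`: smooth functions depending on finitely many coordinates. -/
def IsSmoothCO {Lp : Type} {d : ℕ} (F : FnO Lp d) : Prop :=
  ∃ (s : Finset (Odx Lp d)) (g : (↥s → ℝ) → ℝ),
    ContDiff ℝ (⊤ : ℕ∞) g ∧ ∀ x, F x = g fun o => x o.1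

/-- Membership in `𝒫 ⊆ 𝒞_𝒪` (relative to the partition `𝒪 = 𝒪₊ ⊔ 𝒪₋`). -/
def IsP {Lp : Type} {d : ℕ} (Om Op : Set (Odx Lp d)) (F : FnO Lp d) : Prop :=
  ∃ (m : ℕ) (α : Fin m → (Odx Lp d →₀ ℕ)) (G : Fin m → FnO Lp d),
    Function.Injective α ∧
    (∀ j, ∀ o ∈ (α j).support, o ∈ Om) ∧
    (∀ j, IsSmoothCO (G j)) ∧
    (∀ j, G j ≠ 0) ∧
    (∀ j, DependsOnlyOn (G j) Op) ∧
    F = fun x => ∑ j, G j x * Xpow (α j) x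

/-- `F` is a real polynomial in finitely many of the coordinate functions. -/
def IsPolyFn {Lp : Type} {d : ℕ} (F : FnO Lp d) : Prop :=
  ∃ (s : Finset (Odx Lp d)) (P : MvPolynomial (↥s) ℝ),
    ∀ x, F x = MvPolynomial.eval (fun o => x o.1) P

/-! ### The trees of `𝒱` -/

/-- The set `𝒱` of decorated rooted trees, presented abstractly: a tree is uniquely
built from a root decoration `(𝔩,k) ∈ 𝔇 × ℕ^{d+1}` and a multiset of decorated branches,
and every tree arises this way (induction). -/
structure TreeV (Lp Dr : Type) (d : ℕ) where
  V : Type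
  node : Dr → MIdx d → Multiset (Odx Lp d × V) → V
  node_bij : Function.Bijective
    (fun x : Dr × MIdx d × Multiset (Odx Lp d × V) => node x.1 x.2.1 x.2.2)
  ind : ∀ P : V → Prop,
    (∀ l k (M : Multiset (Odx Lp d × V)), (∀ x ∈ M, P x.2) → P (node l k M)) → ∀ τ, P τ

namespace TreeV

variable {Lp Dr : Type} {d : ℕ} (S : TreeV Lp Dr d)

/-- Rebuild a tree after replacing the `j`-th branch by a linear combination of trees. -/
noncomputable def replace (l : Dr) (k : MIdx d) (L : List (Odx Lp d × S.V))
    (j : Fin L.length) (w : S.V →₀ ℝ) : S.V →₀ ℝ :=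
  w.sum fun τ' c => Finsupp.single (S.node l k (↑(L.set j ((L.get j).1, τ')))) c

/-- Decomposition of a tree into its root decoration and branches. -/
noncomputable def dec : S.V ≃ Dr × MIdx d × Multiset (Odx Lp d × S.V) :=
  (Equiv.ofBijective _ S.node_bij).symm

/-- The polynomial decoration at the root. -/
noncomputable def polyOf (τ : S.V) : MIdx d := (S.dec τ).2.1

/-- The multiset of branches at the root. -/
noncomputable def branchesOf (τ : S.V) : Multiset (Odx Lp d × S.V) := (S.dec τ).2.2

/-- The commutative tree product merging the roots of `g 0, …, g (n-1)`
(adding the polynomial decorations), the merged root receiving the driver label `l`. -/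
noncomputable def merge (l : Dr) {n : ℕ} (g : Fin n → S.V) : S.V :=
  S.node l (∑ r, S.polyOf (g r)) (∑ r, S.branchesOf (g r))

/-- Defining recursion of the grafting operators `⋖̂_o : 𝕍 ⊗ 𝕍 → 𝕍`. -/
def GraftSpec [DecidableEq Lp] (graft : Odx Lp d → S.V → S.V → (S.V →₀ ℝ)) : Prop :=
  ∀ (t : Lp) (p : MIdx d) (τ : S.V) (l : Dr) (k : MIdx d) (L : List (Odx Lp d × S.V)),
    graft (t, p) τ (S.node l k ↑L) =
      msum (k ⊓ p) (fun ℓ =>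
        (mchoose k ℓ : ℝ) •
          Finsupp.single (S.node l (k - ℓ) (((t, p - ℓ), τ) ::ₘ (↑L : Multiset _))) 1)
      + ∑ j : Fin L.length, S.replace l k L j (graft (t, p) τ (L.get j).2)

/-- Defining recursion of the symmetry factor `S(τ)`. -/
def SymSpec [DecidableEq Lp] [DecidableEq S.V] (sym : S.V → ℕ) : Prop :=
  ∀ (l : Dr) (k : MIdx d) (M : Multiset (Odx Lp d × S.V)),
    sym (S.node l k M) =
      mfact k * ∏ x ∈ M.toFinset, Nat.factorial (M.count x) * sym x.2 ^ M.count x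

/-- Defining recursion of the inner product on `𝕍`. -/
def IPSpec (ip : S.V → S.V → ℝ) : Prop :=
  ∀ (l l' : Dr) (k k' : MIdx d) (L L' : List (Odx Lp d × S.V)),
    ip (S.node l k ↑L) (S.node l' k' ↑L') =
      (if l = l' ∧ k = k' then (mfact k : ℝ) else 0) *
        ∑ s : Fin L.length ≃ Fin L'.length,
          ∏ j : Fin L.length,
            (if (L.get j).1 = (L'.get (s j)).1 then ip (L.get j).2 (L'.get (s j)).2 else 0)

/-- Defining recursion of `Υ^F`. -/
def UpsSpec [DecidableEq Lp] (F : Lp → Dr → FnO Lp d) (Ups : Lp → S.V → FnO Lp d) : Prop :=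
  ∀ (t : Lp) (l : Dr) (k : MIdx d) (L : List (Odx Lp d × S.V)),
    Ups t (S.node l k ↑L) = fun x =>
      (∏ j : Fin L.length, Ups (L.get j).1.1 (L.get j).2 x) *
        mpderiv k (Dlist (L.map Prod.fst) (F t l)) x

/-- Defining recursion of the raising operator `↑̂_i` on `𝕍`. -/
def RaiseSpec (raise : Fin (d+1) → S.V → (S.V →₀ ℝ)) : Prop :=
  ∀ (i : Fin (d+1)) (l : Dr) (k : MIdx d) (L : List (Odx Lp d × S.V)),
    raise i (S.node l k ↑L) =
      Finsupp.single (S.node l (k + munit i) ↑L) 1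
      + ∑ j : Fin L.length, S.replace l k L j (raise i (L.get j).2)

/-- Defining recursion of the cutting operator `⋖̂*_o : 𝕍 → 𝕍 ⊗ 𝕍` (elements of
`𝕍 ⊗ 𝕍` represented as finitely supported functions on pairs of trees, a pair
`(branch, trunk)` recording a cut). -/
def CutSpec [DecidableEq Lp] (cut : Odx Lp d → S.V → (S.V × S.V →₀ ℝ)) : Prop :=
  ∀ (t : Lp) (p : MIdx d) (l : Dr) (k : MIdx d) (L : List (Odx Lp d × S.V)),
    cut (t, p) (S.node l k ↑L) =
      (∑ j : Fin L.length,
        if (L.get j).1.1 = t ∧ (L.get j).1.2 ≤ p then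
          ((mfact (p - (L.get j).1.2) : ℝ))⁻¹ •
            Finsupp.single ((L.get j).2,
              S.node l (k + (p - (L.get j).1.2)) ↑(L.eraseIdx j)) 1
        else 0)
      + ∑ j : Fin L.length,
          (cut (t, p) (L.get j).2).sum fun ab c =>
            Finsupp.single (ab.1, S.node l k ↑(L.set j ((L.get j).1, ab.2))) c

/-- Defining recursion of the lowering operator `↑̂*_i` on `𝕍`. -/
def LowSpec (low : Fin (d+1) → S.V → (S.V →₀ ℝ)) : Prop :=
  ∀ (i : Fin (d+1)) (l : Dr) (k : MIdx d) (L : List (Odx Lp d × S.V)),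
    low i (S.node l k ↑L) =
      (k i : ℝ) • Finsupp.single (S.node l (k - munit i) ↑L) 1
      + ∑ j : Fin L.length, S.replace l k L j (low i (L.get j).2)

/-- Defining recursion of the predicate "`τ` is `𝔱`-non-vanishing for `F`". -/
def NVSpec [DecidableEq Lp] (F : Lp → Dr → FnO Lp d) (NV : Lp → S.V → Prop) : Prop :=
  ∀ (t : Lp) (l : Dr) (k : MIdx d) (L : List (Odx Lp d × S.V)),
    NV t (S.node l k ↑L) ↔
      (mpderiv k (Dlist (L.map Prod.fst) (F t l)) ≠ 0 ∧
        ∀ j : Fin L.length, NV (L.get j).1.1 (L.get j).2)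

/-- The coefficient series of `U_o − u_o·𝟏`, for the jet `U` with Taylor coefficients `u`
and planted-tree coefficients `c_𝔱(τ)/S(τ)`. -/
noncomputable def uSeries (z : Dr) (u : Odx Lp d → ℝ) (c : Lp → S.V → ℝ) (sym : S.V → ℕ)
    (o : Odx Lp d) (σ : S.V) : ℝ :=
  (∑ᶠ q : MIdx d, if q ≠ 0 ∧ σ = S.node z q 0 then u (o.1, o.2 + q) / (mfact q : ℝ) else 0) +
  ∑ᶠ τ : S.V, if σ = S.node z 0 {(o, τ)} then c o.1 τ / (sym τ : ℝ) else 0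

/-- The coefficient series of the product `(U − u·𝟏)^α · Ξ_l`, expanded by multilinearity
using the commutative tree product merging the roots. -/
noncomputable def powCoef (coef : Odx Lp d → S.V → ℝ) (l : Dr) (α : Odx Lp d →₀ ℕ)
    (σ : S.V) : ℝ :=
  ∑ᶠ g : Fin (Finsupp.toMultiset α).toList.length → S.V,
    (∏ r, coef ((Finsupp.toMultiset α).toList.get r) (g r)) *
      (if σ = S.merge l g then 1 else 0)

/-- The coefficient series of `Σ_{𝔩∈𝔇} F^𝔩_𝔱(U)·Ξ_𝔩`, where
`F^𝔩_𝔱(U)·Ξ_𝔩 = Σ_α (D^α F^𝔩_𝔱(u)/α!)·(U − u·𝟏)^α·Ξ_𝔩`. -/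
noncomputable def lhsCoef [DecidableEq Lp] (F : Lp → Dr → FnO Lp d) (u : Odx Lp d → ℝ)
    (coef : Odx Lp d → S.V → ℝ) (t : Lp) (σ : S.V) : ℝ :=
  ∑ᶠ l : Dr, ∑ᶠ α : Odx Lp d →₀ ℕ,
    Dexp α (F t l) u / (afact α : ℝ) * S.powCoef coef l α σ

/-- Defining recursion of the 𝔰-degree `|·|_𝔰` of decorated trees (with driver labels in
`𝔏₋ ⊔ {𝟎}`, encoded as `Option Lm` with `none = 𝟎`). -/
def DegSpec {Lm : Type} (S : TreeV Lp (Option Lm) d) (s : Fin (d+1) → ℝ)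
    (degL : Lp → ℝ) (degLm : Lm → ℝ) (deg : S.V → ℝ) : Prop :=
  ∀ (l : Option Lm) (k : MIdx d) (M : Multiset (Odx Lp d × S.V)),
    deg (S.node l k M) =
      l.elim 0 degLm + wdeg s k +
        ((M.map fun x => (degL x.1.1 - wdeg s x.1.2) + deg x.2).sum)

end TreeV

/-! ### The trees of `𝔅` -/

/-- Polynomial node-decoration factors `𝓘_{(𝔱,p)}[X^k]` with `p ≤ k` and `p ≠ k`;
an element is a pair `((𝔱,p), k)` subject to these constraints. -/
abbrev PolyDec (Lp : Type) (d : ℕ) :=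
  {x : Odx Lp d × MIdx d // x.1.2 ≤ x.2 ∧ x.1.2 ≠ x.2}

/-- Raise the polynomial exponent of a `PolyDec` by `e_i`. -/
def PolyDec.bump {Lp : Type} {d : ℕ} (pd : PolyDec Lp d) (i : Fin (d+1)) : PolyDec Lp d :=
  ⟨(pd.1.1, pd.1.2 + munit i), by
    constructor
    · exact fun j => le_trans (pd.2.1 j) (Nat.le_add_right _ _)
    · intro h
      have hi : pd.1.1.2 i ≤ pd.1.2 i := pd.2.1 i
      have h' : pd.1.1.2 i = pd.1.2 i + munit i i := congrFun h i
      simp only [munit, Pi.single_eq_same] at h'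
      omega⟩

/-- The fresh polynomial decoration `𝓘_{(𝔱,p)}[X^{p+e_i}]`. -/
def freshPD {Lp : Type} {d : ℕ} (o : Odx Lp d) (i : Fin (d+1)) : PolyDec Lp d :=
  ⟨(o, o.2 + munit i), by
    constructor
    · exact fun j => Nat.le_add_right _ _
    · intro h
      have h' : o.2 i = o.2 i + munit i i := congrFun h i
      simp only [munit, Pi.single_eq_same] at h'
      omega⟩

/-- Lower the polynomial exponent of a `PolyDec` by `e_i`. -/
def PolyDec.lower {Lp : Type} {d : ℕ} (pd : PolyDec Lp d) (i : Fin (d+1))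
    (h : pd.1.1.2 + munit i ≤ pd.1.2) (hne : ¬ pd.1.2 - munit i = pd.1.1.2) : PolyDec Lp d :=
  ⟨(pd.1.1, pd.1.2 - munit i), by
    constructor
    · intro j
      have hj := h j
      simp only [Pi.add_apply, Pi.sub_apply] at hj ⊢
      omega
    · exact fun hh => hne hh.symm⟩

/-- The set `𝔅` of decorated rooted trees with polynomial node decorations, presented
abstractly. -/
structure TreeB (Lp Dr : Type) (d : ℕ) where
  B : Type
  node : Dr → Multiset (PolyDec Lp d) → Multiset (Odx Lp d × B) → B
  node_bij : Function.Bijective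
    (fun x : Dr × Multiset (PolyDec Lp d) × Multiset (Odx Lp d × B) => node x.1 x.2.1 x.2.2)
  ind : ∀ P : B → Prop,
    (∀ l N (M : Multiset (Odx Lp d × B)), (∀ x ∈ M, P x.2) → P (node l N M)) → ∀ σ, P σ

namespace TreeB

variable {Lp Dr : Type} {d : ℕ} (S : TreeB Lp Dr d)

/-- Rebuild a tree after replacing the `j`-th branch by a linear combination of trees. -/
noncomputable def replace (l : Dr) (N : List (PolyDec Lp d)) (L : List (Odx Lp d × S.B))
    (j : Fin L.length) (w : S.B →₀ ℝ) : S.B →₀ ℝ :=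
  w.sum fun σ' c => Finsupp.single (S.node l ↑N (↑(L.set j ((L.get j).1, σ')))) c

/-- Defining recursion of `Υ̊^F`. -/
def UpsSpec [DecidableEq Lp] (F : Lp → Dr → FnO Lp d) (Ups : Lp → S.B → FnO Lp d) : Prop :=
  ∀ (t : Lp) (l : Dr) (N : List (PolyDec Lp d)) (L : List (Odx Lp d × S.B)),
    Ups t (S.node l ↑N ↑L) = fun x =>
      (∏ i : Fin N.length, x ((N.get i).1.1.1, (N.get i).1.2)) *
      (∏ j : Fin L.length, Ups (L.get j).1.1 (L.get j).2 x) *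
      Dlist (N.map (fun pd => pd.1.1) ++ L.map Prod.fst) (F t l) x

/-- Defining recursion of the grafting operators `⋖_o` on `𝔅`. -/
def GraftSpec (graft : Odx Lp d → S.B → S.B → (S.B →₀ ℝ)) : Prop :=
  ∀ (o : Odx Lp d) (σ' : S.B) (l : Dr) (N : List (PolyDec Lp d)) (L : List (Odx Lp d × S.B)),
    graft o σ' (S.node l ↑N ↑L) =
      Finsupp.single (S.node l ↑N ((o, σ') ::ₘ (↑L : Multiset _))) 1
      + (∑ j : Fin L.length, S.replace l N L j (graft o σ' (L.get j).2))
      + ∑ i : Fin N.length,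
          (if o = ((N.get i).1.1.1, (N.get i).1.2) then
            Finsupp.single
              (S.node l ↑(N.eraseIdx i) (((N.get i).1.1, σ') ::ₘ (↑L : Multiset _))) 1
          else 0)

/-- Defining recursion of the inner product on `𝔹`. -/
def IPSpec (ip : S.B → S.B → ℝ) : Prop :=
  ∀ (l l' : Dr) (N N' : List (PolyDec Lp d)) (L L' : List (Odx Lp d × S.B)),
    ip (S.node l ↑N ↑L) (S.node l' ↑N' ↑L') =
      (if l = l' then 1 else 0) *
      (∑ s : Fin N.length ≃ Fin N'.length,
        ∏ i : Fin N.length,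
          (if (N.get i).1 = (N'.get (s i)).1 then
            (mfact ((N.get i).1.2 - (N.get i).1.1.2) : ℝ)
          else 0)) *
      ∑ s : Fin L.length ≃ Fin L'.length,
        ∏ j : Fin L.length,
          (if (L.get j).1 = (L'.get (s j)).1 then ip (L.get j).2 (L'.get (s j)).2 else 0)

/-- Defining recursion of the raising operator `↑_i` on `𝔅`, producing a formal series
(represented by its coefficient function `𝔅 → ℝ`). -/
def RaiseSpec (raise : Fin (d+1) → S.B → (S.B → ℝ)) : Prop :=
  ∀ (i : Fin (d+1)) (l : Dr) (N : List (PolyDec Lp d)) (L : List (Odx Lp d × S.B)),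
    raise i (S.node l ↑N ↑L) = fun σ'' =>
      (∑ ib : Fin N.length,
        (if σ'' = S.node l ↑(N.set ib ((N.get ib).bump i)) ↑L then 1 else 0))
      + (if ∃ o : Odx Lp d, σ'' = S.node l (freshPD o i ::ₘ (↑N : Multiset _)) ↑L then 1 else 0)
      + ∑ j : Fin L.length,
          ∑ᶠ σ' : S.B,
            raise i (L.get j).2 σ' *
              (if σ'' = S.node l ↑N ↑(L.set j ((L.get j).1, σ')) then 1 else 0)

/-- Defining recursion of the lowering operator `↑*_i` on `𝔅`. -/
def LowSpec (low : Fin (d+1) → S.B → (S.B →₀ ℝ)) : Prop :=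
  ∀ (i : Fin (d+1)) (l : Dr) (N : List (PolyDec Lp d)) (L : List (Odx Lp d × S.B)),
    low i (S.node l ↑N ↑L) =
      (∑ ib : Fin N.length,
        (if h : (N.get ib).1.1.2 + munit i ≤ (N.get ib).1.2 then
          (((N.get ib).1.2 i - (N.get ib).1.1.2 i : ℕ) : ℝ) •
            (if he : (N.get ib).1.2 - munit i = (N.get ib).1.1.2 then
              Finsupp.single (S.node l ↑(N.eraseIdx ib) ↑L) 1
            else
              Finsupp.single (S.node l ↑(N.set ib ((N.get ib).lower i h he)) ↑L) 1)
        else 0))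
      + ∑ j : Fin L.length, S.replace l N L j (low i (L.get j).2)

/-- Defining recursion of the cutting operator `⋖*_o : 𝔹 → 𝔹 ⊗ 𝔹` (elements of
`𝔹 ⊗ 𝔹` represented as finitely supported functions on pairs of trees, a pair
`(branch, trunk)` recording a cut). -/
def CutSpec (cut : Odx Lp d → S.B → (S.B × S.B →₀ ℝ)) : Prop :=
  ∀ (t : Lp) (p : MIdx d) (l : Dr) (N : List (PolyDec Lp d)) (L : List (Odx Lp d × S.B)),
    cut (t, p) (S.node l ↑N ↑L) =
      (∑ j : Fin L.length,
        (if hc : (L.get j).1.1 = t ∧ (L.get j).1.2 ≤ p then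
          ((mfact (p - (L.get j).1.2) : ℝ))⁻¹ •
            Finsupp.single ((L.get j).2,
              S.node l
                (if he : (L.get j).1.2 = p then (↑N : Multiset (PolyDec Lp d))
                 else (⟨((L.get j).1, p), hc.2, he⟩ ::ₘ (↑N : Multiset (PolyDec Lp d))))
                ↑(L.eraseIdx j)) 1
        else 0))
      + ∑ j : Fin L.length,
          (cut (t, p) (L.get j).2).sum fun ab c =>
            Finsupp.single (ab.1, S.node l ↑N ↑(L.set j ((L.get j).1, ab.2))) c

end TreeB

/-- Defining recursion of the map `Q : 𝔹 → 𝕍` collapsing polynomial decorations. -/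
def QSpec {Lp Dr : Type} {d : ℕ} (SB : TreeB Lp Dr d) (SV : TreeV Lp Dr d)
    (Qf : SB.B → SV.V) : Prop :=
  ∀ (l : Dr) (N : Multiset (PolyDec Lp d)) (M : Multiset (Odx Lp d × SB.B)),
    Qf (SB.node l N M) =
      SV.node l ((N.map fun pd => pd.1.2 - pd.1.1.2).sum) (M.map fun x => (x.1, Qf x.2))

/-- The generic summand of the multivariate Faà di Bruno formula, indexed by `(r, q⃗, m⃗)`;
it vanishes unless `(q⃗, m⃗) ∈ I(r,k)`. -/
noncomputable def fdbSummand {Lp : Type} {d : ℕ} [DecidableEq Lp] (lo : LinearOrder (MIdx d))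
    (F : FnO Lp d) (k : MIdx d)
    (p : Σ r : ℕ, (Fin r → MIdx d) × (Fin r → (Odx Lp d →₀ ℕ))) : FnO Lp d :=
  if (∀ j, p.2.2 j ≠ 0) ∧ (∀ j j' : Fin p.1, j < j' → lo.lt (p.2.1 j) (p.2.1 j')) ∧
      (∀ j, lo.lt 0 (p.2.1 j)) ∧ (∑ j, ((p.2.2 j).sum fun _ n => n) • p.2.1 j) = k then
    fun x =>
      (∏ j, (p.2.2 j).prod fun o n =>
        (x (o.1, o.2 + p.2.1 j) / (mfact (p.2.1 j) : ℝ)) ^ n / (Nat.factorial n : ℝ)) *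
        Dexp (∑ j, p.2.2 j) F x
  else 0

/-! ### Generic decorated trees -/

/-- Decorated rooted trees over node species `N` and edge species `E`,
presented abstractly. -/
structure GTree (N E : Type) where
  T : Type
  node : N → Multiset (E × T) → T
  node_bij : Function.Bijective (fun x : N × Multiset (E × T) => node x.1 x.2)
  ind : ∀ P : T → Prop, (∀ Y M, (∀ x ∈ M, P x.2) → P (node Y M)) → ∀ τ, P τ

namespace GTree

/-- Multilinear expansion of a list of edge-decorated linear combinations of trees into a
linear combination of branch multisets. -/
noncomputable def expandAux {N E : Type} (S : GTree N E) :
    List (E × (S.T →₀ ℝ)) → (Multiset (E × S.T) →₀ ℝ)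
  | [] => Finsupp.single 0 1
  | (e, w) :: L =>
      w.sum fun τ' c => (S.expandAux L).sum fun M c' => Finsupp.single ((e, τ') ::ₘ M) (c * c')

/-- Defining recursion of the functorial extension `𝔗(A)` of a linear map `A` between
the free vector spaces on the node species. -/
def MapSpec {N N' E : Type} (S : GTree N E) (S' : GTree N' E)
    (A : N → (N' →₀ ℝ)) (TA : S.T → (S'.T →₀ ℝ)) : Prop :=
  ∀ (Y : N) (L : List (E × S.T)),
    TA (S.node Y ↑L) =
      (A Y).sum fun Y' c =>
        (S'.expandAux (L.map fun x => (x.1, TA x.2))).sum fun M c' =>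
          Finsupp.single (S'.node Y' M) (c * c')

/-- Defining recursion of the inner product on `𝔗(𝖭,𝖤)` induced by an inner product on
the node species. -/
def IPSpec {N E : Type} (S : GTree N E) (ipN : N → N → ℝ) (ip : S.T → S.T → ℝ) : Prop :=
  ∀ (Y Y' : N) (L L' : List (E × S.T)),
    ip (S.node Y ↑L) (S.node Y' ↑L') =
      ipN Y Y' * ∑ s : Fin L.length ≃ Fin L'.length,
        ∏ j : Fin L.length,
          (if (L.get j).1 = (L'.get (s j)).1 then ip (L.get j).2 (L'.get (s j)).2 else 0)

end GTree

namespace SPDEAux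
set_option linter.unusedSectionVars false

variable {α : Type*} [DecidableEq α]

noncomputable def sf (w : α → ℝ) (M : Multiset α) : ℝ :=
  ∏ x ∈ M.toFinset, (Nat.factorial (M.count x) : ℝ) * w x ^ M.count x

lemma sf_zero (w : α → ℝ) : sf w 0 = 1 := by simp [sf]

lemma sf_cons (w : α → ℝ) (a : α) (M : Multiset α) :
    sf w (a ::ₘ M) = ((M.count a : ℝ) + 1) * w a * sf w M := by
  unfold sf
  by_cases h : a ∈ M
  · have ha : a ∈ M.toFinset := Multiset.mem_toFinset.2 h
    have ht : (a ::ₘ M).toFinset = M.toFinset := by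
      rw [Multiset.toFinset_cons, Finset.insert_eq_self.2 ha]
    rw [ht, ← Finset.mul_prod_erase _ _ ha, ← Finset.mul_prod_erase _ _ ha]
    have hc : ∀ x ∈ M.toFinset.erase a,
        (Nat.factorial ((a ::ₘ M).count x) : ℝ) * w x ^ (a ::ₘ M).count x
          = (Nat.factorial (M.count x) : ℝ) * w x ^ M.count x := by
      intro x hx
      rw [Multiset.count_cons_of_ne (Finset.ne_of_mem_erase hx)]
    rw [Finset.prod_congr rfl hc, Multiset.count_cons_self]
    push_cast [Nat.factorial_succ]
    ring
  · have hc0 : M.count a = 0 := Multiset.count_eq_zero.2 h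
    rw [Multiset.toFinset_cons, Finset.prod_insert (mt Multiset.mem_toFinset.1 h)]
    have hc : ∀ x ∈ M.toFinset,
        (Nat.factorial ((a ::ₘ M).count x) : ℝ) * w x ^ (a ::ₘ M).count x
          = (Nat.factorial (M.count x) : ℝ) * w x ^ M.count x := by
      intro x hx
      rw [Multiset.count_cons_of_ne (by rintro rfl; exact h (Multiset.mem_toFinset.1 hx))]
    rw [Finset.prod_congr rfl hc, Multiset.count_cons_self, hc0]
    simp [Nat.factorial]

noncomputable def mof {n : ℕ} (f : Fin n → α) : Multiset α :=
  Multiset.map f Finset.univ.val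

lemma mof_card {n : ℕ} (f : Fin n → α) : Multiset.card (mof f) = n := by
  simp [mof]

lemma mof_comp_perm {n : ℕ} (f : Fin n → α) (σ : Equiv.Perm (Fin n)) :
    mof (f ∘ σ) = mof f := by
  unfold mof
  have h1 : Multiset.map (⇑σ) Finset.univ.val = Finset.univ.val := by
    have := Finset.map_univ_equiv σ
    calc Multiset.map (⇑σ) Finset.univ.val
        = (Finset.map σ.toEmbedding Finset.univ).val := rfl
      _ = Finset.univ.val := by rw [this]
  calc Multiset.map (f ∘ ⇑σ) Finset.univ.val
      = Multiset.map f (Multiset.map (⇑σ) Finset.univ.val) := by rw [Multiset.map_map]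
    _ = Multiset.map f Finset.univ.val := by rw [h1]

lemma mof_succ {n : ℕ} (f : Fin (n+1) → α) : mof f = f 0 ::ₘ mof (f ∘ Fin.succ) := by
  unfold mof
  simp [List.ofFn_succ, Function.comp]

lemma keyB' (w : α → ℝ) : ∀ (n : ℕ) (f g : Fin n → α),
    (∑ s : Equiv.Perm (Fin n), ∏ j, (if f j = g (s j) then w (f j) else 0))
    = if mof f = mof g then sf w (mof f) else 0 := by
  intro n
  induction n with
  | zero =>
    intro f g
    have : mof f = mof g := by
      have h1 : mof f = 0 := by simp [mof]
      have h2 : mof g = 0 := by simp [mof]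
      rw [h1, h2]
    rw [if_pos this]
    have h1 : mof f = 0 := by simp [mof]
    rw [h1, sf_zero]
    simp
  | succ n ih =>
    intro f g
    rw [← Equiv.sum_comp Equiv.Perm.decomposeFin.symm
      (fun s => ∏ j, (if f j = g (s j) then w (f j) else 0)), Fintype.sum_prod_type]
    set M₀ := mof (f ∘ Fin.succ) with hM₀
    have hstep : ∀ p : Fin (n+1),
        (∑ e : Equiv.Perm (Fin n),
          ∏ j, (if f j = g ((Equiv.Perm.decomposeFin.symm (p, e)) j) then w (f j) else 0))
        = if g p = f 0 ∧ f 0 ::ₘ M₀ = mof g then w (f 0) * sf w M₀ else 0 := by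
      intro p
      set g' : Fin n → α := fun j => g (Equiv.swap 0 p j.succ) with hg'
      have hdec : mof g = g p ::ₘ mof g' := by
        have h1 : mof (g ∘ Equiv.swap 0 p) = mof g := mof_comp_perm g (Equiv.swap 0 p)
        have h2 : mof (g ∘ Equiv.swap 0 p) = (g ∘ Equiv.swap 0 p) 0 ::ₘ mof ((g ∘ Equiv.swap 0 p) ∘ Fin.succ) :=
          mof_succ _
        have h3 : (g ∘ Equiv.swap 0 p) 0 = g p := by simp
        have h4 : ((g ∘ Equiv.swap 0 p) ∘ Fin.succ) = g' := rfl
        rw [← h1, h2, h3, h4]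
      have hsum : (∑ e : Equiv.Perm (Fin n),
          ∏ j, (if f j = g ((Equiv.Perm.decomposeFin.symm (p, e)) j) then w (f j) else 0))
          = (if f 0 = g p then w (f 0) else 0) *
            ∑ e : Equiv.Perm (Fin n), ∏ j, (if (f ∘ Fin.succ) j = g' (e j) then w ((f ∘ Fin.succ) j) else 0) := by
        rw [Finset.mul_sum]
        refine Finset.sum_congr rfl (fun e _ => ?_)
        rw [Fin.prod_univ_succ]
        congr 1
        · rw [Equiv.Perm.decomposeFin_symm_apply_zero]
        · refine Finset.prod_congr rfl (fun j _ => ?_)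
          rw [Equiv.Perm.decomposeFin_symm_apply_succ]
          rfl
      rw [hsum, ih (f ∘ Fin.succ) g', ← hM₀]
      by_cases h1 : f 0 = g p
      · rw [if_pos h1]
        by_cases h2 : M₀ = mof g'
        · rw [if_pos h2, if_pos]
          constructor
          · exact h1.symm
          · rw [hdec, ← h1, h2]
        · rw [if_neg h2, if_neg, mul_zero]
          rintro ⟨-, hc⟩
          apply h2
          rw [hdec, ← h1] at hc
          exact (Multiset.cons_inj_right (f 0)).1 hc
      · rw [if_neg h1, zero_mul, if_neg]
        rintro ⟨hc, -⟩; exact h1 hc.symm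
    rw [Finset.sum_congr rfl (fun p _ => hstep p)]
    have hmoff : mof f = f 0 ::ₘ M₀ := mof_succ f
    by_cases hC : f 0 ::ₘ M₀ = mof g
    · have : ∀ p : Fin (n+1), (if g p = f 0 ∧ f 0 ::ₘ M₀ = mof g then w (f 0) * sf w M₀ else 0)
          = if g p = f 0 then w (f 0) * sf w M₀ else 0 := by
        intro p; by_cases h : g p = f 0 <;> simp [h, hC]
      rw [Finset.sum_congr rfl (fun p _ => this p), ← Finset.sum_filter]
      rw [Finset.sum_const]
      have hcount : (Finset.univ.filter (fun p => g p = f 0)).card = Multiset.count (f 0) (mof g) := by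
        rw [mof, Multiset.count_map]
        simp only [Finset.filter_val, Finset.card_def]
        congr 1
        exact Multiset.filter_congr (fun x _ => by constructor <;> exact fun h => h.symm)
      have hcount2 : Multiset.count (f 0) (mof g) = M₀.count (f 0) + 1 := by
        rw [← hC, Multiset.count_cons_self]
      rw [if_pos (hmoff.trans hC), hmoff, sf_cons, hcount, hcount2]
      push_cast
      ring
    · have : ∀ p : Fin (n+1), (if g p = f 0 ∧ f 0 ::ₘ M₀ = mof g then w (f 0) * sf w M₀ else 0) = 0 := by
        intro p; rw [if_neg]; rintro ⟨-, hc⟩; exact hC hc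
      rw [Finset.sum_congr rfl (fun p _ => this p), Finset.sum_const, if_neg, smul_zero]
      rw [hmoff]; exact hC

lemma keyB (w : α → ℝ) (n m : ℕ) (f : Fin n → α) (g : Fin m → α) :
    (∑ s : Fin n ≃ Fin m, ∏ j, (if f j = g (s j) then w (f j) else 0))
    = if mof f = mof g then sf w (mof f) else 0 := by
  rcases eq_or_ne n m with rfl | h
  · exact keyB' w n f g
  · have he : IsEmpty (Fin n ≃ Fin m) := ⟨fun e => h (by simpa using Fintype.card_congr e)⟩
    rw [Finset.univ_eq_empty, Finset.sum_empty, if_neg]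
    intro hc
    apply h
    have := congrArg Multiset.card hc
    simpa [mof_card] using this

lemma mof_get {β : Type*} [DecidableEq β] (L : List β) : mof L.get = (↑L : Multiset β) := by
  unfold mof
  simp

end SPDEAux

/-- the recursively defined inner product on decorated trees is diagonal
with symmetry factors: `⟨τ, τ̄⟩ = δ_{τ,τ̄}·S(τ)`. -/
theorem statement16
    {d : ℕ} {Lp Dr : Type} [Fintype Lp] [DecidableEq Lp]
    (S : TreeV Lp Dr d) [DecidableEq S.V]
    (ip : S.V → S.V → ℝ) (hip : S.IPSpec ip)
    (sym : S.V → ℕ) (hsym : S.SymSpec sym) :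
    ∀ τ τb : S.V, ip τ τb = if τ = τb then (sym τ : ℝ) else 0 := by
  refine S.ind (fun τ => ∀ τb, ip τ τb = if τ = τb then (sym τ : ℝ) else 0) ?_
  intro l k M IH τb
  obtain ⟨⟨l', k', M'⟩, rfl⟩ := S.node_bij.surjective τb
  dsimp only
  obtain ⟨L, rfl⟩ : ∃ L : List (Odx Lp d × S.V), (L : Multiset (Odx Lp d × S.V)) = M :=
    Quotient.exists_rep M
  obtain ⟨L', rfl⟩ : ∃ L' : List (Odx Lp d × S.V), (L' : Multiset (Odx Lp d × S.V)) = M' :=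
    Quotient.exists_rep M'
  set w : Odx Lp d × S.V → ℝ := fun x => (sym x.2 : ℝ) with hw
  have hIH : ∀ (j : Fin L.length) (y : S.V),
      ip (L.get j).2 y = if (L.get j).2 = y then (sym (L.get j).2 : ℝ) else 0 := by
    intro j y
    exact IH (L.get j) (Multiset.mem_coe.2 (L.get_mem j)) y
  have hsum2 : (∑ s : Fin L.length ≃ Fin L'.length,
      ∏ j, (if L.get j = L'.get (s j) then w (L.get j) else 0))
      = if (↑L : Multiset (Odx Lp d × S.V)) = ↑L' then SPDEAux.sf w ↑L else 0 := by
    simpa [SPDEAux.mof_get] using SPDEAux.keyB w L.length L'.length L.get L'.get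
  have hnode : (S.node l k ↑L = S.node l' k' ↑L') ↔
      (l = l' ∧ k = k' ∧ (↑L : Multiset (Odx Lp d × S.V)) = ↑L') := by
    constructor
    · intro h
      have := S.node_bij.injective
        (a₁ := (l, k, (↑L : Multiset (Odx Lp d × S.V))))
        (a₂ := (l', k', (↑L' : Multiset (Odx Lp d × S.V)))) h
      simpa [Prod.ext_iff] using this
    · rintro ⟨rfl, rfl, h⟩; rw [h]
  have hsv : (sym (S.node l k ↑L) : ℝ) = (mfact k : ℝ) * SPDEAux.sf w ↑L := by
    rw [hsym l k ↑L]
    push_cast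
    rw [SPDEAux.sf]
  rw [hip]
  refine (congrArg (fun z => (if l = l' ∧ k = k' then (mfact k : ℝ) else 0) * z)
    (?_ : _ = (if (↑L : Multiset (Odx Lp d × S.V)) = ↑L' then SPDEAux.sf w ↑L else 0))).trans ?_
  · rw [← hsum2]
    refine Finset.sum_congr rfl fun s _ => Finset.prod_congr rfl fun j _ => ?_
    rw [hIH j]
    by_cases h : L.get j = L'.get (s j)
    · have hA : (L.get j).1 = (L'.get (s j)).1 := by rw [h]
      have hB : (L.get j).2 = (L'.get (s j)).2 := by rw [h]
      rw [if_pos hA, if_pos hB, if_pos h]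
    · by_cases hA : (L.get j).1 = (L'.get (s j)).1
      · have hB : ¬(L.get j).2 = (L'.get (s j)).2 := fun hB => h (Prod.ext_iff.2 ⟨hA, hB⟩)
        rw [if_pos hA, if_neg hB, if_neg h]
      · rw [if_neg hA, if_neg h]
  · by_cases h1 : l = l' ∧ k = k'
    · by_cases h2 : (↑L : Multiset (Odx Lp d × S.V)) = ↑L'
      · rw [if_pos h1, if_pos h2, if_pos (hnode.2 ⟨h1.1, h1.2, h2⟩), hsv]
      · rw [if_pos h1, if_neg h2, mul_zero, if_neg (fun hc => h2 (hnode.1 hc).2.2)]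
    · rw [if_neg h1, zero_mul, if_neg (fun hc => h1 ⟨(hnode.1 hc).1, (hnode.1 hc).2.1⟩)]

end SPDERenorm
end

section
/- Ungrafting identity (identity 'grafting_identity'): For every 𝔩 ∈ 𝔇, every k ∈ ℕ^{d+1}, every (𝔱,p) ∈ 𝒪, and every τ ∈ 𝒱 one has, in 𝕍, Ξ_𝔩 X^k 𝓘_{(𝔱,p)}[τ] = Σ_{ℓ≤k, ℓ≤p} (−1)^{|ℓ|}·C(k,ℓ)·(τ ⋖̂_{(𝔱,p−ℓ)} Ξ_𝔩 X^{k−ℓ}), where the sum ranges over multi-indices ℓ with ℓ ≤ k and ℓ ≤ p componentwise, |ℓ| := Σ_{i=0}^d ℓ[i], and C(k,ℓ) := ∏_{i=0}^d binom(k[i],ℓ[i]). -/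
/-
Common framework: multi-indices, the algebra of smooth functions on ℝ^𝒪,
and the spaces of decorated trees 𝒱 and 𝔅 of [Bruned–Chandra–Chevyrev–Hairer,
"Renormalising SPDEs in regularity structures"], presented abstractly together
with the defining recursions of the various operators on them.
-/

open scoped BigOperators Classical

namespace SPDERenorm

set_option maxHeartbeats 1000000 in
lemma msum_eq_sum_Iic {d : ℕ} {A : Type*} [AddCommMonoid A] (m : MIdx d) (f : MIdx d → A) :
    msum m f = ∑ ℓ ∈ Finset.Iic m, f ℓ := by
  unfold msum
  refine Finset.sum_bij' (i := fun e _ => fun i => (e i : ℕ))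
    (j := fun ℓ _ => fun i => (⟨min (ℓ i) (m i), by omega⟩ : Fin (m i + 1)))
    ?_ ?_ ?_ ?_ ?_
  · intro e _
    refine Finset.mem_Iic.mpr (Pi.le_def.mpr fun i => ?_)
    exact Nat.lt_succ_iff.mp (e i).2
  · intro ℓ _; exact Finset.mem_univ _
  · intro e _
    funext i
    exact Fin.ext (by simpa using Nat.lt_succ_iff.mp (e i).2)
  · intro ℓ hℓ
    funext i
    have h := Pi.le_def.mp (Finset.mem_Iic.mp hℓ) i
    simp [Nat.min_eq_left h]
  · intro e _; rfl

lemma alt_sum {d : ℕ} (n : MIdx d) :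
    ∑ ℓ ∈ Finset.Iic n, ((-1:ℝ)^(msize ℓ) * (mchoose n ℓ : ℝ)) = if n = 0 then 1 else 0 := by
  have hI : (Finset.Iic n : Finset (MIdx d)) = Fintype.piFinset fun i => Finset.Iic (n i) := by
    ext ℓ; simp [Fintype.mem_piFinset, Pi.le_def]
  have hterm : ∀ ℓ ∈ Finset.Iic n,
      (-1:ℝ)^(msize ℓ) * (mchoose n ℓ : ℝ)
        = ∏ i, ((fun i j => (-1:ℝ)^j * (Nat.choose (n i) j : ℝ)) i (ℓ i)) := by
    intro ℓ _
    simp only [msize, mchoose, Nat.cast_prod, ← Finset.prod_pow_eq_pow_sum,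
      Finset.prod_mul_distrib]
  rw [Finset.sum_congr hI hterm,
    ← Finset.prod_univ_sum (fun i => Finset.Iic (n i))
      (fun i j => (-1:ℝ)^j * (Nat.choose (n i) j : ℝ))]
  have hfac : ∀ i : Fin (d+1),
      ∑ j ∈ Finset.Iic (n i), ((-1:ℝ)^j * (Nat.choose (n i) j : ℝ)) =
        if n i = 0 then 1 else 0 := by
    intro i
    have hr : Finset.Iic (n i) = Finset.range (n i + 1) := by ext x; simp [Nat.lt_succ_iff]
    have h := congrArg (fun z : ℤ => (z : ℝ)) (@Int.alternating_sum_range_choose (n i))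
    push_cast at h
    rw [hr]
    simpa using h
  rw [Finset.prod_congr rfl fun i _ => hfac i]
  by_cases h : n = 0
  · simp [h]
  · rw [if_neg h]
    obtain ⟨i, hi⟩ : ∃ i, n i ≠ 0 := by
      by_contra hc; push_neg at hc; exact h (funext fun i => hc i)
    exact Finset.prod_eq_zero (Finset.mem_univ i) (by simp [hi])

lemma mchoose_mul' {d : ℕ} {k n ℓ : MIdx d} (hnk : n ≤ k) (hln : ℓ ≤ n) :
    mchoose k ℓ * mchoose (k - ℓ) (n - ℓ) = mchoose k n * mchoose n ℓ := by
  unfold mchoose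
  rw [← Finset.prod_mul_distrib, ← Finset.prod_mul_distrib]
  exact Finset.prod_congr rfl fun i _ =>
    (Nat.choose_mul (Pi.le_def.mp hln i)).symm

lemma sum_Iic_sub {d : ℕ} {A : Type*} [AddCommMonoid A] (M : MIdx d) (F : MIdx d → MIdx d → A) :
    ∑ ℓ ∈ Finset.Iic M, ∑ m ∈ Finset.Iic (M - ℓ), F ℓ m
      = ∑ n ∈ Finset.Iic M, ∑ ℓ ∈ Finset.Iic n, F ℓ (n - ℓ) := by
  rw [Finset.sum_sigma', Finset.sum_sigma']
  refine Finset.sum_bij' (i := fun x _ => (⟨x.1 + x.2, x.1⟩ : Σ _ : MIdx d, MIdx d))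
    (j := fun y _ => (⟨y.2, y.1 - y.2⟩ : Σ _ : MIdx d, MIdx d)) ?_ ?_ ?_ ?_ ?_
  · rintro ⟨a, b⟩ hx
    rw [Finset.mem_sigma, Finset.mem_Iic, Finset.mem_Iic] at hx ⊢
    refine ⟨Pi.le_def.mpr fun i => ?_, Pi.le_def.mpr fun i => ?_⟩
    · have h1 := Pi.le_def.mp hx.1 i; have h2 := Pi.le_def.mp hx.2 i
      simp only [Pi.add_apply, Pi.sub_apply] at *; omega
    · simp only [Pi.add_apply]; omega
  · rintro ⟨a, b⟩ hx
    rw [Finset.mem_sigma, Finset.mem_Iic, Finset.mem_Iic] at hx ⊢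
    refine ⟨Pi.le_def.mpr fun i => ?_, Pi.le_def.mpr fun i => ?_⟩
    · exact le_trans (Pi.le_def.mp hx.2 i) (Pi.le_def.mp hx.1 i)
    · have h1 := Pi.le_def.mp hx.1 i; have h2 := Pi.le_def.mp hx.2 i
      simp only [Pi.sub_apply] at *; omega
  · rintro ⟨a, b⟩ hx
    have h2 : a + b - a = b := by funext i; simp only [Pi.add_apply, Pi.sub_apply]; omega
    exact congrArg (Sigma.mk a) h2
  · rintro ⟨a, b⟩ hx
    rw [Finset.mem_sigma, Finset.mem_Iic, Finset.mem_Iic] at hx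
    have h1 : b + (a - b) = a := by
      funext i
      have h2 := Pi.le_def.mp hx.2 i
      simp only [Pi.add_apply, Pi.sub_apply] at *; omega
    exact Sigma.ext h1 HEq.rfl
  · rintro ⟨a, b⟩ hx
    have h2 : a + b - a = b := by funext i; simp only [Pi.add_apply, Pi.sub_apply]; omega
    rw [h2]

/-- identity `grafting_identity`: the ungrafting identity
`Ξ_𝔩 X^k 𝓘_{(𝔱,p)}[τ] = Σ_{ℓ≤k, ℓ≤p} (−1)^{|ℓ|}·C(k,ℓ)·(τ ⋖̂_{(𝔱,p−ℓ)} Ξ_𝔩 X^{k−ℓ})`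
in `𝕍`. -/
theorem statement17
    {d : ℕ} {Lp Dr : Type} [Fintype Lp] [DecidableEq Lp]
    (S : TreeV Lp Dr d)
    (graft : Odx Lp d → S.V → S.V → (S.V →₀ ℝ)) (hgraft : S.GraftSpec graft) :
    ∀ (l : Dr) (k : MIdx d) (t : Lp) (p : MIdx d) (τ : S.V),
      Finsupp.single (S.node l k {((t, p), τ)}) (1 : ℝ) =
        msum (k ⊓ p) fun ℓ =>
          ((-1 : ℝ) ^ msize ℓ * (mchoose k ℓ : ℝ)) •
            graft (t, p - ℓ) τ (S.node l (k - ℓ) 0) := by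
  intro l k t p τ
  classical
  set M := k ⊓ p with hM
  have hMk : M ≤ k := inf_le_left
  have hMp : M ≤ p := inf_le_right
  have hg : ∀ ℓ : MIdx d, graft (t, p - ℓ) τ (S.node l (k - ℓ) 0)
      = ∑ m ∈ Finset.Iic (M - ℓ),
          (mchoose (k - ℓ) m : ℝ) •
            Finsupp.single (S.node l (k - ℓ - m) {((t, p - ℓ - m), τ)}) (1:ℝ) := by
    intro ℓ
    have h := hgraft t (p - ℓ) τ l (k - ℓ) []
    have hinf : (k - ℓ) ⊓ (p - ℓ) = M - ℓ := by
      funext i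
      simp only [hM, Pi.inf_apply, Pi.sub_apply]
      omega
    rw [hinf, msum_eq_sum_Iic] at h
    simpa using h
  rw [msum_eq_sum_Iic]
  have step1 : (∑ ℓ ∈ Finset.Iic M,
        ((-1 : ℝ) ^ msize ℓ * (mchoose k ℓ : ℝ)) •
          graft (t, p - ℓ) τ (S.node l (k - ℓ) 0))
      = ∑ ℓ ∈ Finset.Iic M, ∑ m ∈ Finset.Iic (M - ℓ),
          ((-1 : ℝ) ^ msize ℓ * (mchoose k ℓ : ℝ) * (mchoose (k - ℓ) m : ℝ)) •
            Finsupp.single (S.node l (k - ℓ - m) {((t, p - ℓ - m), τ)}) (1:ℝ) := by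
    refine Finset.sum_congr rfl fun ℓ _ => ?_
    rw [hg ℓ, Finset.smul_sum]
    exact Finset.sum_congr rfl fun m _ => by rw [smul_smul]
  rw [step1, sum_Iic_sub M (fun ℓ m =>
      ((-1 : ℝ) ^ msize ℓ * (mchoose k ℓ : ℝ) * (mchoose (k - ℓ) m : ℝ)) •
        Finsupp.single (S.node l (k - ℓ - m) {((t, p - ℓ - m), τ)}) (1:ℝ))]
  have step2 : ∀ n ∈ Finset.Iic M,
      (∑ ℓ ∈ Finset.Iic n,
        ((-1 : ℝ) ^ msize ℓ * (mchoose k ℓ : ℝ) * (mchoose (k - ℓ) (n - ℓ) : ℝ)) •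
          Finsupp.single (S.node l (k - ℓ - (n - ℓ)) {((t, p - ℓ - (n - ℓ)), τ)}) (1:ℝ))
      = ((if n = 0 then (1:ℝ) else 0)) •
          Finsupp.single (S.node l (k - n) {((t, p - n), τ)}) (1:ℝ) := by
    intro n hn
    have hnM : n ≤ M := Finset.mem_Iic.mp hn
    have hnk : n ≤ k := le_trans hnM hMk
    have hnp : n ≤ p := le_trans hnM hMp
    have hcong : ∀ ℓ ∈ Finset.Iic n,
        ((-1 : ℝ) ^ msize ℓ * (mchoose k ℓ : ℝ) * (mchoose (k - ℓ) (n - ℓ) : ℝ)) •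
          Finsupp.single (S.node l (k - ℓ - (n - ℓ)) {((t, p - ℓ - (n - ℓ)), τ)}) (1:ℝ)
        = ((mchoose k n : ℝ) * ((-1 : ℝ) ^ msize ℓ * (mchoose n ℓ : ℝ))) •
            Finsupp.single (S.node l (k - n) {((t, p - n), τ)}) (1:ℝ) := by
      intro ℓ hℓ
      have hℓn : ℓ ≤ n := Finset.mem_Iic.mp hℓ
      have e1 : k - ℓ - (n - ℓ) = k - n := by
        funext i
        have h1 := Pi.le_def.mp hℓn i; have h2 := Pi.le_def.mp hnk i
        simp only [Pi.sub_apply] at *; omega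
      have e2 : p - ℓ - (n - ℓ) = p - n := by
        funext i
        have h1 := Pi.le_def.mp hℓn i; have h2 := Pi.le_def.mp hnp i
        simp only [Pi.sub_apply] at *; omega
      have e3 : (mchoose k ℓ : ℝ) * (mchoose (k - ℓ) (n - ℓ) : ℝ)
          = (mchoose k n : ℝ) * (mchoose n ℓ : ℝ) := by
        rw [← Nat.cast_mul, ← Nat.cast_mul, mchoose_mul' hnk hℓn]
      rw [e1, e2]
      congr 1
      rw [mul_assoc, e3]
      ring
    rw [Finset.sum_congr rfl hcong, ← Finset.sum_smul, ← Finset.mul_sum, alt_sum n]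
    congr 1
    by_cases h : n = 0
    · simp [h, mchoose]
    · simp [h]
  rw [Finset.sum_congr rfl step2]
  rw [Finset.sum_eq_single_of_mem 0 (Finset.mem_Iic.mpr zero_le)]
  · have h0k : k - (0 : MIdx d) = k := by funext i; simp
    have h0p : p - (0 : MIdx d) = p := by funext i; simp
    rw [h0k, h0p, if_pos rfl, one_smul]
  · intro n _ hne
    rw [if_neg hne, zero_smul]


end SPDERenorm
end

section
/- Vanishing of Υ and non-vanishing trees: Let F = (F^𝔩_𝔱)_{𝔱∈𝔏₊,𝔩∈𝔏₋⊔{𝟎}} with every F^𝔩_𝔱 ∈ 𝒫, let 𝔱 ∈ 𝔏₊ and τ ∈ T̊. (i) If τ is not 𝔱-non-vanishing for F, then Υ^F_𝔱[τ] = 0. (ii) If in addition every F^𝔩_𝔱 is a polynomial (a real polynomial in finitely many of the coordinate functions 𝒳_o), then the converse holds as well: Υ^F_𝔱[τ] ≠ 0 if and only if τ is 𝔱-non-vanishing for F. -/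
/-
Common framework: multi-indices, the algebra of smooth functions on ℝ^𝒪,
and the spaces of decorated trees 𝒱 and 𝔅 of [Bruned–Chandra–Chevyrev–Hairer,
"Renormalising SPDEs in regularity structures"], presented abstractly together
with the defining recursions of the various operators on them.
-/

open scoped BigOperators Classical

namespace SPDERenorm

section Statement18Aux

open MvPolynomial

variable {Lp : Type} {d : ℕ} [DecidableEq Lp]

private lemma rep_superset18 {F : FnO Lp d} {s : Finset (Odx Lp d)}
    {P : MvPolynomial (↥s) ℝ}
    (h : ∀ x, F x = MvPolynomial.eval (fun o => x o.1) P)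
    {u : Finset (Odx Lp d)} (hsu : s ⊆ u) :
    ∀ x, F x = MvPolynomial.eval (fun o : ↥u => x o.1)
      (MvPolynomial.rename (fun o : ↥s => (⟨o.1, hsu o.2⟩ : ↥u)) P) := by
  intro x
  rw [h x, MvPolynomial.eval_rename]
  rfl

private lemma extFn_restrict18 (s : Finset (Odx Lp d)) (v : ↥s → ℝ) :
    (fun o : ↥s => (fun o' : Odx Lp d => if h : o' ∈ s then v ⟨o', h⟩ else 0) o.1) = v := by
  funext o
  simp [o.2]

private lemma fn_ne_zero_of_poly18 {F : FnO Lp d} {s : Finset (Odx Lp d)}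
    {P : MvPolynomial (↥s) ℝ}
    (h : ∀ x, F x = MvPolynomial.eval (fun o => x o.1) P) (hP : P ≠ 0) : F ≠ 0 := by
  have hv : ∃ v : ↥s → ℝ, MvPolynomial.eval v P ≠ 0 := by
    by_contra hc
    push_neg at hc
    exact hP (MvPolynomial.funext fun v => by rw [hc v, map_zero])
  obtain ⟨v, hv⟩ := hv
  refine Function.ne_iff.2 ⟨fun o' => if h : o' ∈ s then v ⟨o', h⟩ else 0, ?_⟩
  rw [h, extFn_restrict18]
  simpa using hv

private lemma isPolyFn_mul18 {F G : FnO Lp d} (hF : IsPolyFn F) (hG : IsPolyFn G) :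
    IsPolyFn (fun x => F x * G x) ∧
      (F ≠ 0 → G ≠ 0 → (fun x => F x * G x) ≠ (0 : FnO Lp d)) := by
  obtain ⟨s₁, P₁, h₁⟩ := hF
  obtain ⟨s₂, P₂, h₂⟩ := hG
  set u := s₁ ∪ s₂ with hu
  have h₁' := rep_superset18 h₁ (Finset.subset_union_left (s₂ := s₂))
  have h₂' := rep_superset18 h₂ (Finset.subset_union_right (s₁ := s₁))
  set Q₁ := MvPolynomial.rename
    (fun o : ↥s₁ => (⟨o.1, Finset.subset_union_left o.2⟩ : ↥u)) P₁ with hQ₁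
  set Q₂ := MvPolynomial.rename
    (fun o : ↥s₂ => (⟨o.1, Finset.subset_union_right o.2⟩ : ↥u)) P₂ with hQ₂
  have hrep : ∀ x, F x * G x = MvPolynomial.eval (fun o : ↥u => x o.1) (Q₁ * Q₂) := by
    intro x
    rw [map_mul, ← h₁' x, ← h₂' x]
  refine ⟨⟨u, Q₁ * Q₂, hrep⟩, ?_⟩
  intro hF0 hG0
  have hq₁ : Q₁ ≠ 0 := by
    rcases Function.ne_iff.1 hF0 with ⟨x, hx⟩
    intro h0
    exact hx (by rw [h₁' x, h0, map_zero]; rfl)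
  have hq₂ : Q₂ ≠ 0 := by
    rcases Function.ne_iff.1 hG0 with ⟨x, hx⟩
    intro h0
    exact hx (by rw [h₂' x, h0, map_zero]; rfl)
  exact fn_ne_zero_of_poly18 hrep (mul_ne_zero hq₁ hq₂)

private lemma isPolyFn_add18 {F G : FnO Lp d} (hF : IsPolyFn F) (hG : IsPolyFn G) :
    IsPolyFn (fun x => F x + G x) := by
  obtain ⟨s₁, P₁, h₁⟩ := hF
  obtain ⟨s₂, P₂, h₂⟩ := hG
  set u := s₁ ∪ s₂ with hu
  have h₁' := rep_superset18 h₁ (Finset.subset_union_left (s₂ := s₂))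
  have h₂' := rep_superset18 h₂ (Finset.subset_union_right (s₁ := s₁))
  refine ⟨u, MvPolynomial.rename
      (fun o : ↥s₁ => (⟨o.1, Finset.subset_union_left o.2⟩ : ↥u)) P₁
    + MvPolynomial.rename
      (fun o : ↥s₂ => (⟨o.1, Finset.subset_union_right o.2⟩ : ↥u)) P₂, fun x => ?_⟩
  rw [map_add, ← h₁' x, ← h₂' x]

private lemma isPolyFn_const18 (c : ℝ) : IsPolyFn (fun _ : Odx Lp d → ℝ => c) :=
  ⟨∅, MvPolynomial.C c, fun x => by simp⟩

private lemma isPolyFn_sum18 {ι : Type*} (u : Finset ι) (f : ι → FnO Lp d)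
    (h : ∀ j ∈ u, IsPolyFn (f j)) : IsPolyFn (fun x => ∑ j ∈ u, f j x) := by
  classical
  induction u using Finset.induction_on with
  | empty => simpa using isPolyFn_const18 0
  | insert _ _ ha ih =>
      simp only [Finset.sum_insert ha]
      exact isPolyFn_add18 (h _ (Finset.mem_insert_self _ _))
        (ih fun j hj => h j (Finset.mem_insert_of_mem hj))

private lemma isPolyFn_prodW18 {ι : Type*} (u : Finset ι) (f : ι → FnO Lp d)
    (h : ∀ j ∈ u, IsPolyFn (f j)) : IsPolyFn (fun x => ∏ j ∈ u, f j x) := by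
  classical
  induction u using Finset.induction_on with
  | empty => simpa using isPolyFn_const18 1
  | insert _ _ ha ih =>
      simp only [Finset.prod_insert ha]
      exact (isPolyFn_mul18 (h _ (Finset.mem_insert_self _ _))
        (ih fun j hj => h j (Finset.mem_insert_of_mem hj))).1

private lemma isPolyFn_prodNZ18 {ι : Type*} (u : Finset ι) (f : ι → FnO Lp d)
    (h : ∀ j ∈ u, IsPolyFn (f j) ∧ f j ≠ 0) :
    IsPolyFn (fun x => ∏ j ∈ u, f j x) ∧ (fun x => ∏ j ∈ u, f j x) ≠ (0 : FnO Lp d) := by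
  classical
  induction u using Finset.induction_on with
  | empty =>
      refine ⟨by simpa using isPolyFn_const18 1, ?_⟩
      simp only [Finset.prod_empty]
      exact Function.ne_iff.2 ⟨fun _ => 0, by norm_num⟩
  | insert _ _ ha ih =>
      rename_i a u'
      have ih' := ih fun j hj => h j (Finset.mem_insert_of_mem hj)
      have ha' := h a (Finset.mem_insert_self _ _)
      simp only [Finset.prod_insert ha]
      have := isPolyFn_mul18 ha'.1 ih'.1
      exact ⟨this.1, this.2 ha'.2 ih'.2⟩

private lemma isPolyFn_Xc18 (o : Odx Lp d) : IsPolyFn (Xc o) :=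
  ⟨{o}, MvPolynomial.X ⟨o, Finset.mem_singleton_self o⟩, fun x => by simp [Xc]⟩

private lemma hasDerivAt_eval_update18 {σ : Type*} [DecidableEq σ]
    (P : MvPolynomial σ ℝ) (v : σ → ℝ) (i : σ) (a : ℝ) :
    HasDerivAt (fun t => MvPolynomial.eval (Function.update v i t) P)
      (MvPolynomial.eval (Function.update v i a) (MvPolynomial.pderiv i P)) a := by
  induction P using MvPolynomial.induction_on with
  | C c =>
      simpa [MvPolynomial.pderiv_C] using hasDerivAt_const a c
  | add p q hp hq =>
      simp only [map_add]; exact hp.add hq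
  | mul_X p j hp =>
      have hX : HasDerivAt (fun t => Function.update v i t j)
          (if j = i then 1 else 0) a := by
        rcases eq_or_ne j i with rfl | hji
        · simpa using hasDerivAt_id' a
        · simp only [Function.update_of_ne hji, if_neg hji]
          exact hasDerivAt_const a (v j)
      have hm : HasDerivAt (fun t => MvPolynomial.eval (Function.update v i t) p * Function.update v i t j) _ a :=
        hp.mul hX
      have hgoal : (fun t => MvPolynomial.eval (Function.update v i t) (p * MvPolynomial.X j))
          = fun t => MvPolynomial.eval (Function.update v i t) p * Function.update v i t j := by
        funext t; simp
      rw [hgoal]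
      convert hm using 1
      simp only [MvPolynomial.pderiv_mul, MvPolynomial.pderiv_X, Pi.single_apply, apply_ite,
        map_add, map_mul, map_one, map_zero, MvPolynomial.eval_X]
      split_ifs <;> ring

private lemma dpart_rep18 {F : FnO Lp d} {s : Finset (Odx Lp d)}
    {P : MvPolynomial (↥s) ℝ}
    (h : ∀ x, F x = MvPolynomial.eval (fun o => x o.1) P) (o : Odx Lp d) (x : Odx Lp d → ℝ) :
    Dpart o F x = if ho : o ∈ s then
        MvPolynomial.eval (fun o' : ↥s => x o'.1) (MvPolynomial.pderiv ⟨o, ho⟩ P)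
      else 0 := by
  classical
  by_cases ho : o ∈ s
  · have hupd : ∀ t, (fun o' : ↥s => Function.update x o t o'.1)
        = Function.update (fun o' : ↥s => x o'.1) ⟨o, ho⟩ t := by
      intro t; funext o'
      rcases eq_or_ne o' ⟨o, ho⟩ with rfl | hne
      · simp
      · have hne' : o'.1 ≠ o := fun hh => hne (Subtype.ext hh)
        simp [Function.update_of_ne hne', Function.update_of_ne hne]
    have hfun : (fun t => F (Function.update x o t))
        = fun t => MvPolynomial.eval
            (Function.update (fun o' : ↥s => x o'.1) ⟨o, ho⟩ t) P := by
      funext t; rw [h, hupd]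
    rw [dif_pos ho]
    show deriv (fun t => F (Function.update x o t)) (x o) = _
    rw [hfun, (hasDerivAt_eval_update18 P _ ⟨o, ho⟩ (x o)).deriv]
    have hself : Function.update (fun o' : ↥s => x o'.1) ⟨o, ho⟩ (x o)
        = fun o' : ↥s => x o'.1 :=
      Function.update_eq_self (⟨o, ho⟩ : ↥s) (fun o' : ↥s => x o'.1)
    rw [hself]
  · have hfun : (fun t => F (Function.update x o t)) = fun _ => F x := by
      funext t
      rw [h, h]
      have hupd : (fun o' : ↥s => Function.update x o t o'.1) = fun o' : ↥s => x o'.1 := by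
        funext o'
        have hne' : o'.1 ≠ o := fun hh => ho (hh ▸ o'.2)
        simp [Function.update_of_ne hne']
      rw [hupd]
    rw [dif_neg ho]
    show deriv (fun t => F (Function.update x o t)) (x o) = 0
    rw [hfun, deriv_const]

private lemma isPolyFn_dpart18 {F : FnO Lp d} (hF : IsPolyFn F) (o : Odx Lp d) :
    IsPolyFn (Dpart o F) := by
  obtain ⟨s, P, h⟩ := hF
  by_cases ho : o ∈ s
  · exact ⟨s, MvPolynomial.pderiv ⟨o, ho⟩ P, fun x => by rw [dpart_rep18 h, dif_pos ho]⟩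
  · refine ⟨∅, 0, fun x => by rw [dpart_rep18 h, dif_neg ho, map_zero]⟩

private lemma isPolyFn_pderivO18 {F : FnO Lp d} (hF : IsPolyFn F) (i : Fin (d+1)) :
    IsPolyFn (pderivO i F) := by
  obtain ⟨s, P, h⟩ := hF
  have hfun : pderivO i F
      = fun x => ∑ o ∈ s, Xc (o.1, o.2 + munit i) x * Dpart o F x := by
    funext x
    refine finsum_eq_sum_of_support_subset _ ?_
    intro o ho
    simp only [Function.mem_support] at ho
    by_contra hos
    exact ho (by rw [dpart_rep18 h, dif_neg (fun hh => hos (Finset.mem_coe.mpr hh)), mul_zero])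
  rw [hfun]
  exact isPolyFn_sum18 s _ fun o _ =>
    (isPolyFn_mul18 (isPolyFn_Xc18 _) (isPolyFn_dpart18 ⟨s, P, h⟩ o)).1

private lemma isPolyFn_iterate_pderivO18 (i : Fin (d+1)) :
    ∀ (n : ℕ) {F : FnO Lp d}, IsPolyFn F → IsPolyFn ((pderivO i)^[n] F) := by
  intro n
  induction n with
  | zero => intro F hF; simpa using hF
  | succ n ih =>
      intro F hF
      rw [Function.iterate_succ_apply]
      exact ih (isPolyFn_pderivO18 hF i)

private lemma isPolyFn_mpderiv18 (k : MIdx d) {F : FnO Lp d} (hF : IsPolyFn F) :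
    IsPolyFn (mpderiv k F) := by
  show IsPolyFn ((List.finRange (d+1)).foldr (fun i G => (pderivO i)^[k i] G) F)
  induction (List.finRange (d+1)) with
  | nil => exact hF
  | cons a l ih => exact isPolyFn_iterate_pderivO18 a (k a) ih

private lemma isPolyFn_dlist18 (L : List (Odx Lp d)) {F : FnO Lp d} (hF : IsPolyFn F) :
    IsPolyFn (Dlist L F) := by
  induction L with
  | nil => exact hF
  | cons a l ih => exact isPolyFn_dpart18 ih a

end Statement18Aux

/-- vanishing of `Υ` and non-vanishing trees. (i) If `τ` is not
`𝔱`-non-vanishing for `F` then `Υ^F_𝔱[τ] = 0`. (ii) If moreover every `F^𝔩_𝔱` is a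
polynomial, then `Υ^F_𝔱[τ] ≠ 0` if and only if `τ` is `𝔱`-non-vanishing for `F`.
Here `𝔇 = 𝔏₋ ⊔ {𝟎}` is encoded as `Option Lm` with `none = 𝟎`. -/
theorem statement18
    {d : ℕ} {Lp Lm : Type} [Fintype Lp] [DecidableEq Lp] [Fintype Lm]
    (Om Op : Set (Odx Lp d))
    (hdisj : ∀ o, ¬(o ∈ Om ∧ o ∈ Op)) (hcover : ∀ o, o ∈ Om ∨ o ∈ Op)
    (F : Lp → Option Lm → FnO Lp d) (hF : ∀ t l, IsP Om Op (F t l))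
    (S : TreeV Lp (Option Lm) d)
    (Ups : Lp → S.V → FnO Lp d) (hUps : S.UpsSpec F Ups)
    (NV : Lp → S.V → Prop) (hNV : S.NVSpec F NV) :
    (∀ (t : Lp) (τ : S.V), ¬ NV t τ → Ups t τ = 0) ∧
      ((∀ t l, IsPolyFn (F t l)) →
        ∀ (t : Lp) (τ : S.V), Ups t τ ≠ 0 ↔ NV t τ) := by
  classical
  have part1 : ∀ τ (t : Lp), ¬ NV t τ → Ups t τ = 0 := by
    refine S.ind (fun τ => ∀ t : Lp, ¬ NV t τ → Ups t τ = 0) ?_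
    intro l k M hM t hnv
    obtain ⟨L, hL⟩ := Quotient.exists_rep M
    have hL' : M = (↑L : Multiset (Odx Lp d × S.V)) := hL.symm
    rw [hL'] at hnv hM ⊢
    rw [hNV t l k L] at hnv
    rw [hUps t l k L]
    by_cases hD : mpderiv k (Dlist (L.map Prod.fst) (F t l)) = 0
    · funext x
      have h0 : mpderiv k (Dlist (L.map Prod.fst) (F t l)) x = 0 := by rw [hD]; rfl
      simp only [Pi.zero_apply]
      rw [h0, mul_zero]
    · have hj : ∃ j : Fin L.length, ¬ NV (L.get j).1.1 (L.get j).2 := by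
        by_contra hc
        push_neg at hc
        exact hnv ⟨hD, hc⟩
      obtain ⟨j, hj⟩ := hj
      have hz : Ups (L.get j).1.1 (L.get j).2 = 0 :=
        hM (L.get j) (Multiset.mem_coe.2 (List.get_mem L j)) _ hj
      funext x
      simp only [Pi.zero_apply]
      have hp0 : (∏ j' : Fin L.length, Ups (L.get j').1.1 (L.get j').2 x) = 0 :=
        Finset.prod_eq_zero (Finset.mem_univ j) (by rw [hz]; rfl)
      rw [hp0, zero_mul]
  refine ⟨fun t τ => part1 τ t, ?_⟩
  intro hpoly
  have upoly : ∀ τ (t : Lp), IsPolyFn (Ups t τ) := by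
    refine S.ind (fun τ => ∀ t : Lp, IsPolyFn (Ups t τ)) ?_
    intro l k M hM t
    obtain ⟨L, hL⟩ := Quotient.exists_rep M
    have hL' : M = (↑L : Multiset (Odx Lp d × S.V)) := hL.symm
    rw [hL'] at hM ⊢
    rw [hUps t l k L]
    exact (isPolyFn_mul18
      (isPolyFn_prodW18 Finset.univ (fun j : Fin L.length => Ups (L.get j).1.1 (L.get j).2)
        (fun j _ => hM (L.get j) (Multiset.mem_coe.2 (List.get_mem L j)) _))
      (isPolyFn_mpderiv18 k (isPolyFn_dlist18 _ (hpoly t l)))).1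
  have part2 : ∀ τ (t : Lp), NV t τ → Ups t τ ≠ 0 := by
    refine S.ind (fun τ => ∀ t : Lp, NV t τ → Ups t τ ≠ 0) ?_
    intro l k M hM t hnv
    obtain ⟨L, hL⟩ := Quotient.exists_rep M
    have hL' : M = (↑L : Multiset (Odx Lp d × S.V)) := hL.symm
    rw [hL'] at hnv hM ⊢
    rw [hNV t l k L] at hnv
    obtain ⟨hD, hall⟩ := hnv
    rw [hUps t l k L]
    have hprod := isPolyFn_prodNZ18 Finset.univ
      (fun j : Fin L.length => Ups (L.get j).1.1 (L.get j).2)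
      (fun j _ => ⟨upoly _ _, hM (L.get j) (Multiset.mem_coe.2 (List.get_mem L j)) _ (hall j)⟩)
    exact (isPolyFn_mul18 hprod.1
      (isPolyFn_mpderiv18 k (isPolyFn_dlist18 _ (hpoly t l)))).2 hprod.2 hD
  intro t τ
  exact ⟨fun hne => by_contra fun hn => hne (part1 τ t hn), fun h => part2 τ t h⟩


end SPDERenorm
end

section
/- Subcriticality implies finiteness of low-degree non-vanishing trees: Let F = (F^𝔩_𝔱)_{𝔱∈𝔏₊,𝔩∈𝔏₋⊔{𝟎}} with every F^𝔩_𝔱 ∈ 𝒫, and suppose that F obeys reg. Then for every γ ∈ ℝ and every 𝔱 ∈ 𝔏₊, the set {τ ∈ T̊ : τ is 𝔱-non-vanishing for F and |τ|_𝔰 < γ} is finite. -/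
/-
Common framework: multi-indices, the algebra of smooth functions on ℝ^𝒪,
and the spaces of decorated trees 𝒱 and 𝔅 of [Bruned–Chandra–Chevyrev–Hairer,
"Renormalising SPDEs in regularity structures"], presented abstractly together
with the defining recursions of the various operators on them.
-/

open scoped BigOperators Classical
set_option linter.unusedSectionVars false
set_option maxHeartbeats 1000000

namespace SPDERenorm

section Aux
variable {Lp : Type} {d : ℕ} [DecidableEq Lp]

/-! basic weights -/

noncomputable def rwt (regp : Lp → ℝ) (s : Fin (d+1) → ℝ) (o : Odx Lp d) : ℝ :=
  regp o.1 - wdeg s o.2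

noncomputable def wfw (regp : Lp → ℝ) (s : Fin (d+1) → ℝ) (β : Odx Lp d →₀ ℕ) : ℝ :=
  β.sum fun o n => (n : ℝ) * rwt regp s o

lemma wdeg_add {d : ℕ} (s : Fin (d+1) → ℝ) (k l : MIdx d) :
    wdeg s (k + l) = wdeg s k + wdeg s l := by
  simp [wdeg, add_mul, Finset.sum_add_distrib]

lemma wdeg_munit {d : ℕ} (s : Fin (d+1) → ℝ) (i : Fin (d+1)) : wdeg s (munit i) = s i := by
  simp only [wdeg, munit, Pi.single_apply]
  rw [Finset.sum_congr rfl (g := fun j => if j = i then s j else 0) (fun j _ => by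
    by_cases h : j = i <;> simp [h])]
  simp

lemma wdeg_nonneg {d : ℕ} {s : Fin (d+1) → ℝ} (hs : ∀ i, 1 ≤ s i) (k : MIdx d) :
    0 ≤ wdeg s k :=
  Finset.sum_nonneg fun i _ => mul_nonneg (Nat.cast_nonneg _)
    (le_trans zero_le_one (hs i))

lemma rwt_bump (regp : Lp → ℝ) (s : Fin (d+1) → ℝ) (o : Odx Lp d) (i : Fin (d+1)) :
    rwt regp s (o.1, o.2 + munit i) = rwt regp s o - s i := by
  simp [rwt, wdeg_add, wdeg_munit]; ring

lemma wfw_add (regp : Lp → ℝ) (s : Fin (d+1) → ℝ) (β γ : Odx Lp d →₀ ℕ) :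
    wfw regp s (β + γ) = wfw regp s β + wfw regp s γ :=
  Finsupp.sum_add_index' (by simp) (by intros; push_cast; ring)

lemma wfw_single (regp : Lp → ℝ) (s : Fin (d+1) → ℝ) (o : Odx Lp d) (n : ℕ) :
    wfw regp s (Finsupp.single o n) = (n : ℝ) * rwt regp s o :=
  Finsupp.sum_single_index (by simp)

lemma wfw_sub_single (regp : Lp → ℝ) (s : Fin (d+1) → ℝ) {β : Odx Lp d →₀ ℕ} {o : Odx Lp d}
    (h : β o ≠ 0) :
    wfw regp s (β - Finsupp.single o 1) = wfw regp s β - rwt regp s o := by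
  have hle : Finsupp.single o 1 ≤ β := Finsupp.single_le_iff.2 (Nat.one_le_iff_ne_zero.2 h)
  have hadd : (β - Finsupp.single o 1) + Finsupp.single o 1 = β := tsub_add_cancel_of_le hle
  have h2 := wfw_add regp s (β - Finsupp.single o 1) (Finsupp.single o 1)
  rw [hadd, wfw_single] at h2
  rw [h2]; push_cast; ring

/-! Xpow lemmas -/

lemma Xpow_split (β : Odx Lp d →₀ ℕ) (o : Odx Lp d) (x : Odx Lp d → ℝ) :
    Xpow β x = x o ^ β o * Xpow (Finsupp.erase o β) x := by
  by_cases ho : o ∈ β.support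
  · exact (Finsupp.mul_prod_erase β o _ ho).symm
  · rw [show Xpow (Finsupp.erase o β) x = Xpow β x by
      rw [Finsupp.erase_of_notMem_support ho],
      Finsupp.notMem_support_iff.1 ho, pow_zero, one_mul]

lemma Xpow_update (β : Odx Lp d →₀ ℕ) (o : Odx Lp d) (x : Odx Lp d → ℝ) (u : ℝ) :
    Xpow β (Function.update x o u) = u ^ β o * Xpow (Finsupp.erase o β) x := by
  rw [Xpow_split β o, Function.update_self]
  congr 1
  refine Finsupp.prod_congr fun a ha => ?_
  have hne : a ≠ o := by
    rw [Finsupp.support_erase] at ha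
    exact (Finset.mem_erase.1 ha).1
  rw [Function.update_of_ne hne]

lemma Xpow_add (β γ : Odx Lp d →₀ ℕ) (x : Odx Lp d → ℝ) :
    Xpow (β + γ) x = Xpow β x * Xpow γ x :=
  Finsupp.prod_add_index' (by simp) (fun a b c => pow_add _ _ _)

lemma Xpow_single (o : Odx Lp d) (n : ℕ) (x : Odx Lp d → ℝ) :
    Xpow (Finsupp.single o n) x = x o ^ n :=
  Finsupp.prod_single_index (pow_zero _)

lemma Xpow_sub_single (β : Odx Lp d →₀ ℕ) (o : Odx Lp d) (x : Odx Lp d → ℝ) :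
    Xpow (β - Finsupp.single o 1) x = x o ^ (β o - 1) * Xpow (Finsupp.erase o β) x := by
  rw [Xpow_split (β - Finsupp.single o 1) o x]
  have h1 : (β - Finsupp.single o 1 : Odx Lp d →₀ ℕ) o = β o - 1 := by
    rw [Finsupp.tsub_apply β (Finsupp.single o 1) o, Finsupp.single_eq_same]
  have h2 : Finsupp.erase o (β - Finsupp.single o 1) = Finsupp.erase o β := by
    ext a
    by_cases h : a = o
    · subst h; simp [Finsupp.erase_same]
    · rw [Finsupp.erase_ne h, Finsupp.erase_ne h, Finsupp.tsub_apply,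
        Finsupp.single_eq_of_ne' (Ne.symm h)]
      simp
  rw [h1, h2]

/-! smoothness lemmas -/

lemma isSmoothCO_zero : IsSmoothCO (0 : FnO Lp d) :=
  ⟨∅, fun _ => 0, contDiff_const, fun _ => rfl⟩

lemma hasDerivAt_update {ι : Type*} [Fintype ι] [DecidableEq ι] (y : ι → ℝ) (i : ι) (t : ℝ) :
    HasDerivAt (fun u : ℝ => Function.update y i u) (Pi.single i 1) t := by
  have h : (fun u : ℝ => Function.update y i u)
      = fun u : ℝ => Function.update y i 0 + u • (Pi.single i (1:ℝ) : ι → ℝ) := by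
    funext u; funext j
    by_cases hj : j = i
    · subst hj; simp
    · simp [Function.update_of_ne hj, Pi.single_eq_of_ne hj]
  rw [h]
  simpa using ((hasDerivAt_id t).smul_const (Pi.single i (1:ℝ))).const_add
    (Function.update y i 0)

lemma hasDerivAt_smooth_update {s : Finset (Odx Lp d)} {g : (↥s → ℝ) → ℝ}
    (hg : ContDiff ℝ (⊤:ℕ∞) g) (x : Odx Lp d → ℝ) (o : Odx Lp d) (t : ℝ) :
    HasDerivAt (fun u : ℝ => g fun i : ↥s => Function.update x o u i.1)
      (if h : o ∈ s then
        fderiv ℝ g (fun i : ↥s => Function.update x o t i.1) (Pi.single ⟨o, h⟩ 1) else 0) t := by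
  by_cases h : o ∈ s
  · rw [dif_pos h]
    have hfun : ∀ u : ℝ, (fun i : ↥s => Function.update x o u i.1)
        = Function.update (fun i : ↥s => x i.1) ⟨o, h⟩ u := by
      intro u; funext i
      by_cases hi : i = (⟨o, h⟩ : ↥s)
      · subst hi; simp
      · have hio : i.1 ≠ o := fun hh => hi (Subtype.ext hh)
        rw [Function.update_of_ne hio, Function.update_of_ne hi]
    have hA := hasDerivAt_update (fun i : ↥s => x i.1) ⟨o,h⟩ t
    have hgd : HasFDerivAt g
        (fderiv ℝ g (Function.update (fun i : ↥s => x i.1) ⟨o,h⟩ t))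
        (Function.update (fun i : ↥s => x i.1) ⟨o,h⟩ t) :=
      ((hg.differentiable (by norm_cast)).differentiableAt).hasFDerivAt
    have hcomp := hgd.comp_hasDerivAt t hA
    simp only [hfun]
    exact hcomp
  · rw [dif_neg h]
    have hfun : (fun u : ℝ => g fun i : ↥s => Function.update x o u i.1)
        = fun _ : ℝ => g fun i : ↥s => x i.1 := by
      funext u; congr 1; funext i
      refine Function.update_of_ne ?_ _ _
      intro hh
      exact h (hh ▸ i.2)
    rw [hfun]
    exact hasDerivAt_const _ _

lemma IsSmoothCO.hasDerivAt_coord {H : FnO Lp d} (hH : IsSmoothCO H) (o : Odx Lp d)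
    (x : Odx Lp d → ℝ) :
    HasDerivAt (fun u => H (Function.update x o u)) (Dpart o H x) (x o) := by
  obtain ⟨s, g, hg, heq⟩ := hH
  have hfe : (fun u => H (Function.update x o u))
      = fun u : ℝ => g fun i : ↥s => Function.update x o u i.1 := funext fun u => heq _
  have h := hasDerivAt_smooth_update hg x o (x o)
  have hd : Dpart o H x
      = deriv (fun u : ℝ => g fun i : ↥s => Function.update x o u i.1) (x o) := by
    simp only [Dpart, hfe]
  rw [hfe, hd]
  exact h.differentiableAt.hasDerivAt

lemma IsSmoothCO.dpart {H : FnO Lp d} (hH : IsSmoothCO H) (o : Odx Lp d) :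
    IsSmoothCO (Dpart o H) := by
  obtain ⟨s, g, hg, heq⟩ := hH
  by_cases h : o ∈ s
  · refine ⟨s, fun y => fderiv ℝ g y (Pi.single ⟨o,h⟩ 1), ?_, ?_⟩
    · exact (ContinuousLinearMap.apply ℝ ℝ (Pi.single (⟨o,h⟩ : ↥s) (1:ℝ))).contDiff.comp
        (hg.fderiv_right (m := (⊤:ℕ∞)) (by norm_cast))
    · intro x
      have hfe : (fun u => H (Function.update x o u))
          = fun u : ℝ => g fun i : ↥s => Function.update x o u i.1 := funext fun u => heq _
      have hval := (hasDerivAt_smooth_update hg x o (x o)).deriv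
      rw [dif_pos h] at hval
      have hpt : (fun i : ↥s => Function.update x o (x o) i.1) = fun i : ↥s => x i.1 := by
        rw [Function.update_eq_self]
      simp only [Dpart, hfe, hval, hpt]
  · refine ⟨∅, fun _ => 0, contDiff_const, fun x => ?_⟩
    have hfe : (fun u => H (Function.update x o u))
        = fun u : ℝ => g fun i : ↥s => Function.update x o u i.1 := funext fun u => heq _
    have hval := (hasDerivAt_smooth_update hg x o (x o)).deriv
    rw [dif_neg h] at hval
    simp only [Dpart, hfe, hval]

lemma dependsOnlyOn_of_smooth {H : FnO Lp d} {s : Finset (Odx Lp d)} {g : (↥s → ℝ) → ℝ}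
    (heq : ∀ x, H x = g fun i : ↥s => x i.1) :
    DependsOnlyOn H (↑s : Set (Odx Lp d)) := fun x y hxy => by
  rw [heq, heq]; congr 1; funext i; exact hxy i.1 i.2

lemma dpart_eq_zero_of_dependsOnlyOn {H : FnO Lp d} {P : Set (Odx Lp d)}
    (hH : DependsOnlyOn H P) {o : Odx Lp d} (ho : o ∉ P) : Dpart o H = 0 := by
  funext x
  have hfe : (fun u => H (Function.update x o u)) = fun _ : ℝ => H x := by
    funext u
    refine hH _ _ fun o' ho' => Function.update_of_ne ?_ _ _
    intro h
    exact ho (h ▸ ho')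
  simp [Dpart, hfe]

lemma DependsOnlyOn.dpart {H : FnO Lp d} {P : Set (Odx Lp d)} (hH : DependsOnlyOn H P)
    (o : Odx Lp d) : DependsOnlyOn (Dpart o H) P := by
  by_cases ho : o ∈ P
  · intro x y hxy
    have h1 : (fun u => H (Function.update x o u)) = fun u => H (Function.update y o u) := by
      funext u
      refine hH _ _ fun o' ho' => ?_
      by_cases h : o' = o
      · subst h; simp
      · rw [Function.update_of_ne h, Function.update_of_ne h]; exact hxy o' ho'
    simp only [Dpart, h1, hxy o ho]
  · rw [dpart_eq_zero_of_dependsOnlyOn hH ho]; intro x y _; rfl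

lemma IsSmoothCO.constMul {H : FnO Lp d} (hH : IsSmoothCO H) (c : ℝ) :
    IsSmoothCO (fun x => c * H x) := by
  obtain ⟨s, g, hg, heq⟩ := hH
  exact ⟨s, fun y => c * g y, contDiff_const.mul hg, fun x => by
    show c * H x = c * g fun o : ↥s => x o.1
    rw [heq]⟩

lemma IsSmoothCO.coordMul {H : FnO Lp d} (hH : IsSmoothCO H) (o' : Odx Lp d) :
    IsSmoothCO (fun x => x o' * H x) := by
  obtain ⟨s, g, hg, heq⟩ := hH
  refine ⟨insert o' s, fun y => y ⟨o', Finset.mem_insert_self _ _⟩ *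
    g (fun i : ↥s => y ⟨i.1, Finset.mem_insert_of_mem i.2⟩), ?_, ?_⟩
  · have hproj : ContDiff ℝ (⊤:ℕ∞)
        fun (y : ↥(insert o' s) → ℝ) (i : ↥s) => y ⟨i.1, Finset.mem_insert_of_mem i.2⟩ :=
      contDiff_pi.2 fun i =>
        (ContinuousLinearMap.proj (R := ℝ) (φ := fun _ : ↥(insert o' s) => ℝ) (⟨i.1, Finset.mem_insert_of_mem i.2⟩ :
          ↥(insert o' s))).contDiff
    exact ((ContinuousLinearMap.proj (R := ℝ)
      ((⟨o', Finset.mem_insert_self _ _⟩ : ↥(insert o' s)))).contDiff).mul (hg.comp hproj)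
  · intro x
    show x o' * H x = x o' * g fun i : ↥s => x i.1
    rw [heq]

lemma DependsOnlyOn.coordMul {H : FnO Lp d} {P : Set (Odx Lp d)} (hH : DependsOnlyOn H P)
    {o' : Odx Lp d} (h : o' ∈ P) : DependsOnlyOn (fun x => x o' * H x) P :=
  fun x y hxy => by
    show x o' * H x = y o' * H y
    rw [hxy o' h, hH x y hxy]

lemma DependsOnlyOn.constMul {H : FnO Lp d} {P : Set (Odx Lp d)} (hH : DependsOnlyOn H P)
    (c : ℝ) : DependsOnlyOn (fun x => c * H x) P :=
  fun x y hxy => by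
    show c * H x = c * H y
    rw [hH x y hxy]

noncomputable def depSet (H : FnO Lp d) : Finset (Odx Lp d) :=
  if h : IsSmoothCO H then h.choose else ∅

lemma depSet_spec {H : FnO Lp d} (h : IsSmoothCO H) :
    DependsOnlyOn H ↑(depSet H) := by
  rw [depSet, dif_pos h]
  obtain ⟨g, hg, heq⟩ := h.choose_spec
  exact dependsOnlyOn_of_smooth heq

/-! sums of terms -/

noncomputable def sumf (L : List (FnO Lp d × (Odx Lp d →₀ ℕ))) : FnO Lp d :=
  fun x => (L.map fun p => p.1 x * Xpow p.2 x).sum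

noncomputable def dterm (o : Odx Lp d) (p : FnO Lp d × (Odx Lp d →₀ ℕ)) : FnO Lp d :=
  fun x => Dpart o p.1 x * Xpow p.2 x
    + (p.2 o : ℝ) * (p.1 x * Xpow (p.2 - Finsupp.single o 1) x)

lemma term_hasDerivAt {H : FnO Lp d} (hH : IsSmoothCO H) (β : Odx Lp d →₀ ℕ)
    (o : Odx Lp d) (x : Odx Lp d → ℝ) :
    HasDerivAt (fun u => H (Function.update x o u) * Xpow β (Function.update x o u))
      (Dpart o H x * Xpow β x
        + (β o : ℝ) * (H x * Xpow (β - Finsupp.single o 1) x)) (x o) := by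
  have h1 := hH.hasDerivAt_coord o x
  have h2 : HasDerivAt (fun u => Xpow β (Function.update x o u))
      ((β o : ℝ) * Xpow (β - Finsupp.single o 1) x) (x o) := by
    have hfe : (fun u => Xpow β (Function.update x o u))
        = fun u : ℝ => u ^ β o * Xpow (Finsupp.erase o β) x :=
      funext fun u => Xpow_update β o x u
    rw [hfe]
    have h3 := (hasDerivAt_pow (β o) (x o)).mul_const (Xpow (Finsupp.erase o β) x)
    refine h3.congr_deriv ?_
    rw [Xpow_sub_single]
    ring
  have h4 := h1.mul h2
  simp only [Function.update_eq_self] at h4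
  exact h4.congr_deriv (by ring)

lemma sumf_hasDerivAt {L : List (FnO Lp d × (Odx Lp d →₀ ℕ))}
    (hL : ∀ p ∈ L, IsSmoothCO p.1) (o : Odx Lp d) (x : Odx Lp d → ℝ) :
    HasDerivAt (fun u => sumf L (Function.update x o u))
      ((L.map fun p => dterm o p x).sum) (x o) := by
  induction L with
  | nil => simpa [sumf] using hasDerivAt_const (x o) (0:ℝ)
  | cons p L ih =>
    have h1 := term_hasDerivAt (hL p List.mem_cons_self) p.2 o x
    have h2 := ih (fun q hq => hL q (List.mem_cons_of_mem _ hq))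
    simp only [sumf, List.map_cons, List.sum_cons]
    exact h1.add h2

lemma dpart_sumf {L : List (FnO Lp d × (Odx Lp d →₀ ℕ))}
    (hL : ∀ p ∈ L, IsSmoothCO p.1) (o : Odx Lp d) :
    Dpart o (sumf L) = fun x => (L.map fun p => dterm o p x).sum := by
  funext x
  have := (sumf_hasDerivAt hL o x).deriv
  simpa [Dpart] using this

lemma Dpart_zero (o : Odx Lp d) : Dpart o (0 : FnO Lp d) = 0 := by
  funext x; simp [Dpart]

lemma Dlist_zero (L : List (Odx Lp d)) : Dlist L (0 : FnO Lp d) = 0 := by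
  induction L with
  | nil => rfl
  | cons o L ih => show Dpart o (Dlist L 0) = 0; rw [ih, Dpart_zero]

lemma pderivO_zero (i : Fin (d+1)) : pderivO i (0 : FnO Lp d) = 0 := by
  funext x
  show (∑ᶠ o : Odx Lp d, Xc (o.1, o.2 + munit i) x * Dpart o (0:FnO Lp d) x) = 0
  have : ∀ o : Odx Lp d, Xc (o.1, o.2 + munit i) x * Dpart o (0:FnO Lp d) x = 0 := by
    intro o; rw [Dpart_zero]; simp
  simp only [this]
  exact finsum_zero

lemma mpderiv_zero (k : MIdx d) : mpderiv k (0 : FnO Lp d) = 0 := by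
  show (List.finRange (d+1)).foldr (fun i G => (pderivO i)^[k i] G) 0 = 0
  have hiter : ∀ (i : Fin (d+1)) (n : ℕ), (pderivO (Lp := Lp) i)^[n] 0 = 0 := by
    intro i n
    induction n with
    | zero => rfl
    | succ n ih => rw [Function.iterate_succ_apply, pderivO_zero, ih]
  induction (List.finRange (d+1)) with
  | nil => rfl
  | cons j l ih => rw [List.foldr_cons, ih, hiter]

/-! The admissibility invariant -/

variable (Op Om : Set (Odx Lp d)) (regp : Lp → ℝ) (s : Fin (d+1) → ℝ)

def Adm (U : Set (Odx Lp d)) (c : ℝ) (F : FnO Lp d) : Prop :=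
  ∃ L : List (FnO Lp d × (Odx Lp d →₀ ℕ)),
    (∀ p ∈ L, IsSmoothCO p.1 ∧ DependsOnlyOn p.1 Op ∧
      (↑p.2.support : Set (Odx Lp d)) ⊆ U ∧ (↑p.2.support : Set (Odx Lp d)) ⊆ Om ∧
      c ≤ wfw regp s p.2) ∧ F = sumf L

variable {Op Om regp s}

lemma Adm.mono {U U' : Set (Odx Lp d)} {c c' : ℝ} {F : FnO Lp d}
    (h : Adm Op Om regp s U c F) (hU : U ⊆ U') (hc : c' ≤ c) : Adm Op Om regp s U' c' F := by
  obtain ⟨L, hL, rfl⟩ := h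
  exact ⟨L, fun p hp => ⟨(hL p hp).1, (hL p hp).2.1, ((hL p hp).2.2.1).trans hU,
    (hL p hp).2.2.2.1, le_trans hc (hL p hp).2.2.2.2⟩, rfl⟩

lemma Adm.zero {U : Set (Odx Lp d)} {c : ℝ} : Adm Op Om regp s U c (0 : FnO Lp d) :=
  ⟨[], by simp, by funext x; simp [sumf]⟩

lemma Adm.add {U : Set (Odx Lp d)} {c : ℝ} {F G : FnO Lp d}
    (hF : Adm Op Om regp s U c F) (hG : Adm Op Om regp s U c G) :
    Adm Op Om regp s U c (fun x => F x + G x) := by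
  obtain ⟨L1, hL1, rfl⟩ := hF
  obtain ⟨L2, hL2, rfl⟩ := hG
  refine ⟨L1 ++ L2, ?_, ?_⟩
  · intro p hp
    rcases List.mem_append.1 hp with h | h
    exacts [hL1 p h, hL2 p h]
  · funext x; simp [sumf]

lemma Adm.list_sum {U : Set (Odx Lp d)} {c : ℝ} (L' : List (FnO Lp d))
    (h : ∀ f ∈ L', Adm Op Om regp s U c f) :
    Adm Op Om regp s U c (fun x => (L'.map fun f => f x).sum) := by
  induction L' with
  | nil =>
    have : (fun x : Odx Lp d → ℝ => (([] : List (FnO Lp d)).map fun f => f x).sum)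
        = (0 : FnO Lp d) := by funext x; simp
    rw [this]; exact Adm.zero
  | cons f L' ih =>
    have h1 := h f List.mem_cons_self
    have h2 := ih fun g hg => h g (List.mem_cons_of_mem _ hg)
    have heq : (fun x : Odx Lp d → ℝ => ((f :: L').map fun f => f x).sum)
        = fun x => f x + (L'.map fun g => g x).sum := by funext x; simp
    rw [heq]
    exact h1.add h2

lemma Adm.finsetSum {U : Set (Odx Lp d)} {c : ℝ} {ι : Type*} (T : Finset ι)
    (f : ι → FnO Lp d) (h : ∀ j ∈ T, Adm Op Om regp s U c (f j)) :
    Adm Op Om regp s U c (fun x => ∑ j ∈ T, f j x) := by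
  induction T using Finset.induction_on with
  | empty =>
    have : (fun x : Odx Lp d → ℝ => ∑ j ∈ (∅ : Finset ι), f j x) = (0 : FnO Lp d) := by
      funext x; simp
    rw [this]; exact Adm.zero
  | insert a T hnot ih =>
    have h1 := h a (Finset.mem_insert_self _ _)
    have h2 := ih fun j hj => h j (Finset.mem_insert_of_mem hj)
    have heq : (fun x : Odx Lp d → ℝ => ∑ j ∈ insert a T, f j x)
        = fun x => f a x + ∑ j ∈ T, f j x := by
      funext x; rw [Finset.sum_insert hnot]
    rw [heq]
    exact h1.add h2

lemma Adm.c_nonpos (hOmc : ∀ o : Odx Lp d, o ∈ Om → rwt regp s o < 0)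
    {U : Set (Odx Lp d)} {c : ℝ} {F : FnO Lp d}
    (h : Adm Op Om regp s U c F) (hF : F ≠ 0) : c ≤ 0 := by
  obtain ⟨L, hL, rfl⟩ := h
  cases L with
  | nil => exact absurd (by funext x; simp [sumf]) hF
  | cons p L' =>
    have hc := (hL p List.mem_cons_self).2.2.2.2
    have hOmS := (hL p List.mem_cons_self).2.2.2.1
    refine le_trans hc ?_
    refine Finset.sum_nonpos fun a ha => ?_
    exact mul_nonpos_iff.2 (Or.inl ⟨Nat.cast_nonneg _,
      le_of_lt (hOmc a (hOmS ha))⟩)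

lemma adm_dterm
    (hOpc : ∀ o : Odx Lp d, o ∈ Op ↔ 0 < rwt regp s o)
    (hOmc : ∀ o : Odx Lp d, o ∈ Om ↔ rwt regp s o < 0)
    (hcov : ∀ o : Odx Lp d, o ∈ Om ∨ o ∈ Op)
    {U : Set (Odx Lp d)} {c : ℝ} {p : FnO Lp d × (Odx Lp d →₀ ℕ)}
    (hsm : IsSmoothCO p.1) (hdep : DependsOnlyOn p.1 Op)
    (hU : (↑p.2.support : Set (Odx Lp d)) ⊆ U) (hOmS : (↑p.2.support : Set (Odx Lp d)) ⊆ Om)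
    (hw : c ≤ wfw regp s p.2) (o : Odx Lp d) :
    Adm Op Om regp s U (c - min (rwt regp s o) 0) (dterm o p) := by
  by_cases ho : o ∈ Op
  · have hr : 0 < rwt regp s o := (hOpc o).1 ho
    have hβ : p.2 o = 0 := by
      by_contra hne
      have h1 : o ∈ Om := hOmS (Finsupp.mem_support_iff.2 hne)
      have := (hOmc o).1 h1; linarith
    refine ⟨[(Dpart o p.1, p.2)], ?_, ?_⟩
    · rintro q hq
      rw [List.mem_singleton] at hq
      subst hq
      refine ⟨hsm.dpart o, hdep.dpart o, hU, hOmS, ?_⟩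
      rw [min_eq_right hr.le]
      simpa using hw
    · funext x; simp [dterm, sumf, hβ]
  · have hom : o ∈ Om := (hcov o).resolve_right ho
    have hrneg : rwt regp s o < 0 := (hOmc o).1 hom
    have hDH : Dpart o p.1 = 0 := dpart_eq_zero_of_dependsOnlyOn hdep ho
    by_cases hβ : p.2 o = 0
    · refine ⟨[], by simp, ?_⟩
      funext x; simp [dterm, sumf, hDH, hβ]
    · refine ⟨[((fun x => (p.2 o : ℝ) * p.1 x), p.2 - Finsupp.single o 1)], ?_, ?_⟩
      · rintro q hq
        rw [List.mem_singleton] at hq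
        subst hq
        refine ⟨hsm.constMul _, hdep.constMul _, ?_, ?_, ?_⟩
        · exact subset_trans (Finset.coe_subset.2 Finsupp.support_tsub) hU
        · exact subset_trans (Finset.coe_subset.2 Finsupp.support_tsub) hOmS
        · rw [wfw_sub_single regp s hβ, min_eq_left hrneg.le]
          linarith
      · funext x; simp [dterm, sumf, hDH]; ring

lemma Adm.dpart
    (hOpc : ∀ o : Odx Lp d, o ∈ Op ↔ 0 < rwt regp s o)
    (hOmc : ∀ o : Odx Lp d, o ∈ Om ↔ rwt regp s o < 0)
    (hcov : ∀ o : Odx Lp d, o ∈ Om ∨ o ∈ Op)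
    {U : Set (Odx Lp d)} {c : ℝ} {F : FnO Lp d}
    (h : Adm Op Om regp s U c F) (o : Odx Lp d) :
    Adm Op Om regp s U (c - min (rwt regp s o) 0) (Dpart o F) := by
  obtain ⟨L, hL, rfl⟩ := h
  rw [dpart_sumf (fun p hp => (hL p hp).1) o]
  have heq : (fun x => (L.map fun p => dterm o p x).sum)
      = fun x => ((L.map (dterm o)).map fun f => f x).sum := by
    funext x; rw [List.map_map]; rfl
  rw [heq]
  refine Adm.list_sum _ ?_
  intro f hf
  rw [List.mem_map] at hf
  obtain ⟨p, hp, rfl⟩ := hf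
  obtain ⟨h1, h2, h3, h4, h5⟩ := hL p hp
  exact adm_dterm hOpc hOmc hcov h1 h2 h3 h4 h5 o

lemma Adm.dpart_eq_zero {U : Set (Odx Lp d)} {c : ℝ} {F : FnO Lp d}
    (h : Adm Op Om regp s U c F) {o : Odx Lp d} (hop : o ∉ Op) (hU : o ∉ U) :
    Dpart o F = 0 := by
  obtain ⟨L, hL, rfl⟩ := h
  rw [dpart_sumf (fun p hp => (hL p hp).1) o]
  funext x
  refine List.sum_eq_zero fun y hy => ?_
  rw [List.mem_map] at hy
  obtain ⟨p, hp, rfl⟩ := hy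
  obtain ⟨h1, h2, h3, h4, h5⟩ := hL p hp
  have hDH : Dpart o p.1 = 0 := dpart_eq_zero_of_dependsOnlyOn h2 hop
  have hβ : p.2 o = 0 := by
    by_contra hne
    exact hU (h3 (Finsupp.mem_support_iff.2 hne))
  simp [dterm, hDH, hβ]

lemma Adm.dlist
    (hOpc : ∀ o : Odx Lp d, o ∈ Op ↔ 0 < rwt regp s o)
    (hOmc : ∀ o : Odx Lp d, o ∈ Om ↔ rwt regp s o < 0)
    (hcov : ∀ o : Odx Lp d, o ∈ Om ∨ o ∈ Op)
    {U : Set (Odx Lp d)} {c : ℝ} {F : FnO Lp d}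
    (h : Adm Op Om regp s U c F) (L : List (Odx Lp d)) :
    Adm Op Om regp s U (c - ((L.map fun o => min (rwt regp s o) 0).sum)) (Dlist L F) := by
  induction L with
  | nil => simpa [Dlist] using h
  | cons o L' ih =>
    have h2 := ih.dpart hOpc hOmc hcov o
    have heq : Dlist (o :: L') F = Dpart o (Dlist L' F) := rfl
    rw [heq]
    refine h2.mono subset_rfl (le_of_eq ?_)
    simp
    ring

lemma mem_foldr_union {p : FnO Lp d × (Odx Lp d →₀ ℕ)}
    {L : List (FnO Lp d × (Odx Lp d →₀ ℕ))} (hp : p ∈ L) :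
    (depSet p.1 ∪ p.2.support) ⊆
      L.foldr (fun q acc => (depSet q.1 ∪ q.2.support) ∪ acc) ∅ := by
  induction L with
  | nil => cases hp
  | cons q L ih =>
    rcases List.mem_cons.1 hp with rfl | hp'
    · exact Finset.subset_union_left
    · exact (ih hp').trans Finset.subset_union_right

lemma Adm.exists_support {U : Set (Odx Lp d)} {c : ℝ} {F : FnO Lp d}
    (h : Adm Op Om regp s U c F) :
    ∃ sF : Finset (Odx Lp d), ∀ o, o ∉ sF → Dpart o F = 0 := by
  obtain ⟨L, hL, rfl⟩ := h
  refine ⟨L.foldr (fun q acc => (depSet q.1 ∪ q.2.support) ∪ acc) ∅, fun o ho => ?_⟩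
  rw [dpart_sumf (fun p hp => (hL p hp).1) o]
  funext x
  refine List.sum_eq_zero fun y hy => ?_
  rw [List.mem_map] at hy
  obtain ⟨p, hp, rfl⟩ := hy
  have hnot : o ∉ depSet p.1 ∪ p.2.support := fun hmem => ho (mem_foldr_union hp hmem)
  rw [Finset.mem_union] at hnot
  push_neg at hnot
  have hDH : Dpart o p.1 = 0 :=
    dpart_eq_zero_of_dependsOnlyOn (depSet_spec (hL p hp).1) (by
      simpa using hnot.1)
  have hβ : p.2 o = 0 := Finsupp.notMem_support_iff.1 hnot.2
  simp [dterm, hDH, hβ]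

lemma Adm.coordMul
    (hOpc : ∀ o : Odx Lp d, o ∈ Op ↔ 0 < rwt regp s o)
    (hOmc : ∀ o : Odx Lp d, o ∈ Om ↔ rwt regp s o < 0)
    (hcov : ∀ o : Odx Lp d, o ∈ Om ∨ o ∈ Op)
    {c : ℝ} {F : FnO Lp d}
    (h : Adm Op Om regp s Set.univ c F) (o' : Odx Lp d) :
    Adm Op Om regp s Set.univ (c + min (rwt regp s o') 0) (fun x => x o' * F x) := by
  obtain ⟨L, hL, rfl⟩ := h
  by_cases ho : o' ∈ Op
  · have hr : 0 < rwt regp s o' := (hOpc o').1 ho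
    refine ⟨L.map fun p => ((fun x => x o' * p.1 x), p.2), ?_, ?_⟩
    · intro q hq
      rw [List.mem_map] at hq
      obtain ⟨p, hp, rfl⟩ := hq
      obtain ⟨h1, h2, h3, h4, h5⟩ := hL p hp
      exact ⟨h1.coordMul o', h2.coordMul ho, h3, h4, by rw [min_eq_right hr.le]; linarith⟩
    · funext x
      show x o' * sumf L x = _
      simp only [sumf, List.map_map]
      rw [← List.sum_map_mul_left]
      congr 1
      refine List.map_congr_left fun p _ => ?_
      simp [Function.comp]
      ring
  · have hom : o' ∈ Om := (hcov o').resolve_right ho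
    have hrneg : rwt regp s o' < 0 := (hOmc o').1 hom
    refine ⟨L.map fun p => (p.1, p.2 + Finsupp.single o' 1), ?_, ?_⟩
    · intro q hq
      rw [List.mem_map] at hq
      obtain ⟨p, hp, rfl⟩ := hq
      obtain ⟨h1, h2, h3, h4, h5⟩ := hL p hp
      refine ⟨h1, h2, by simp, ?_, ?_⟩
      · refine subset_trans (Finset.coe_subset.2 Finsupp.support_add) ?_
        rw [Finset.coe_union]
        refine Set.union_subset h4 ?_
        refine subset_trans (Finset.coe_subset.2 Finsupp.support_single_subset) ?_
        simpa using hom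
      · rw [wfw_add, wfw_single, min_eq_left hrneg.le]
        push_cast
        linarith
    · funext x
      show x o' * sumf L x = _
      simp only [sumf, List.map_map]
      rw [← List.sum_map_mul_left]
      congr 1
      refine List.map_congr_left fun p _ => ?_
      simp only [Function.comp, Xpow_add, Xpow_single, pow_one]
      ring

lemma Adm.pderiv
    (hOpc : ∀ o : Odx Lp d, o ∈ Op ↔ 0 < rwt regp s o)
    (hOmc : ∀ o : Odx Lp d, o ∈ Om ↔ rwt regp s o < 0)
    (hcov : ∀ o : Odx Lp d, o ∈ Om ∨ o ∈ Op)
    (hs1 : ∀ i, 1 ≤ s i)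
    {c : ℝ} {F : FnO Lp d}
    (h : Adm Op Om regp s Set.univ c F) (i : Fin (d+1)) :
    Adm Op Om regp s Set.univ (c - s i) (pderivO i F) := by
  obtain ⟨sF, hsF⟩ := h.exists_support
  have hfun : pderivO i F = fun x => ∑ o ∈ sF, (x (o.1, o.2 + munit i) * Dpart o F x) := by
    funext x
    show (∑ᶠ o : Odx Lp d, Xc (o.1, o.2 + munit i) x * Dpart o F x) = _
    refine finsum_eq_finset_sum_of_support_subset _ ?_
    intro o ho
    by_contra hno
    apply ho
    show Xc (o.1, o.2 + munit i) x * Dpart o F x = 0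
    rw [hsF o (by simpa using hno)]
    simp [Xc]
  rw [hfun]
  refine Adm.finsetSum sF _ fun o _ => ?_
  have h1 := h.dpart hOpc hOmc hcov o
  have h2 := (h1.coordMul hOpc hOmc hcov (o.1, o.2 + munit i))
  refine h2.mono subset_rfl ?_
  rw [rwt_bump]
  have hmin : min (rwt regp s o) 0 - s i ≤ min (rwt regp s o - s i) 0 := by
    rw [← min_sub_sub_right]
    refine min_le_min le_rfl ?_
    have := hs1 i
    linarith
  linarith

lemma Adm.iterate_pderiv
    (hOpc : ∀ o : Odx Lp d, o ∈ Op ↔ 0 < rwt regp s o)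
    (hOmc : ∀ o : Odx Lp d, o ∈ Om ↔ rwt regp s o < 0)
    (hcov : ∀ o : Odx Lp d, o ∈ Om ∨ o ∈ Op)
    (hs1 : ∀ i, 1 ≤ s i)
    {c : ℝ} {F : FnO Lp d}
    (h : Adm Op Om regp s Set.univ c F) (i : Fin (d+1)) (n : ℕ) :
    Adm Op Om regp s Set.univ (c - n * s i) ((pderivO i)^[n] F) := by
  induction n generalizing c F with
  | zero => simpa using h
  | succ n ih =>
    rw [Function.iterate_succ_apply]
    have h2 := ih (h.pderiv hOpc hOmc hcov hs1 i)
    refine h2.mono subset_rfl (le_of_eq ?_)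
    push_cast
    ring

lemma Adm.mpderiv
    (hOpc : ∀ o : Odx Lp d, o ∈ Op ↔ 0 < rwt regp s o)
    (hOmc : ∀ o : Odx Lp d, o ∈ Om ↔ rwt regp s o < 0)
    (hcov : ∀ o : Odx Lp d, o ∈ Om ∨ o ∈ Op)
    (hs1 : ∀ i, 1 ≤ s i)
    {c : ℝ} {F : FnO Lp d}
    (h : Adm Op Om regp s Set.univ c F) (k : MIdx d) :
    Adm Op Om regp s Set.univ (c - wdeg s k) (mpderiv k F) := by
  have key : ∀ (l : List (Fin (d+1))) (c : ℝ) (F : FnO Lp d),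
      Adm Op Om regp s Set.univ c F →
      Adm Op Om regp s Set.univ (c - (l.map fun i => (k i : ℝ) * s i).sum)
        (l.foldr (fun i G => (pderivO i)^[k i] G) F) := by
    intro l
    induction l with
    | nil => intro c F h; simpa using h
    | cons i l ih =>
      intro c F h
      have h1 := ih c F h
      have h2 := h1.iterate_pderiv hOpc hOmc hcov hs1 i (k i)
      rw [List.foldr_cons]
      refine h2.mono subset_rfl (le_of_eq ?_)
      simp
      ring
  have h2 := key (List.finRange (d+1)) c F h
  have hsum : ((List.finRange (d+1)).map fun i => (k i : ℝ) * s i).sum = wdeg s k := by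
    rw [wdeg, Fin.sum_univ_def]
  show Adm Op Om regp s Set.univ (c - wdeg s k)
    ((List.finRange (d+1)).foldr (fun i G => (pderivO i)^[k i] G) F)
  rw [← hsum]
  exact h2

/-! finiteness of bounded decorated trees -/

lemma finite_multiset_subset {X : Type*} {T : Set X} (hT : T.Finite) (B : ℕ) :
    {M : Multiset X | Multiset.card M ≤ B ∧ ∀ x ∈ M, x ∈ T}.Finite := by
  have hfin : Finite ↥T := hT.to_subtype
  have hl : {l : List ↥T | l.length ≤ B}.Finite := List.finite_length_le ↥T B
  refine Set.Finite.subset (hl.image fun l => ((l.map Subtype.val : List X) : Multiset X)) ?_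
  rintro M ⟨hcard, hmem⟩
  refine ⟨M.toList.attach.map fun x =>
    (⟨x.1, hmem x.1 (Multiset.mem_toList.1 x.2)⟩ : ↥T), ?_, ?_⟩
  · simp [Multiset.length_toList] at hcard ⊢
    exact hcard
  · dsimp only
    rw [List.map_map]
    have h0 : (M.toList.attach.map fun x => x.1) = M.toList := List.attach_map_subtype_val _
    rw [show (Subtype.val ∘ fun x : {a // a ∈ M.toList} =>
      (⟨x.1, hmem x.1 (Multiset.mem_toList.1 x.2)⟩ : ↥T)) = fun x => x.1 from rfl, h0]
    exact Multiset.coe_toList M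

lemma finite_wdeg_le {d : ℕ} {s : Fin (d+1) → ℝ} (hs1 : ∀ i, 1 ≤ s i) (W : ℝ) :
    {k : MIdx d | wdeg s k ≤ W}.Finite := by
  refine Set.Finite.subset
    (Set.Finite.pi (fun i : Fin (d+1) => Set.finite_Iic (⌊W⌋₊)) :
      (Set.univ.pi fun _ : Fin (d+1) => Set.Iic ⌊W⌋₊).Finite) ?_
  intro k hk
  rw [Set.mem_pi]
  intro i _
  have h1 : (k i : ℝ) ≤ wdeg s k := by
    have h2 : (k i : ℝ) * 1 ≤ (k i : ℝ) * s i :=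
      mul_le_mul_of_nonneg_left (hs1 i) (Nat.cast_nonneg _)
    have h3 : (k i : ℝ) * s i ≤ wdeg s k := by
      rw [wdeg]
      exact Finset.single_le_sum (f := fun j => (k j : ℝ) * s j)
        (fun j _ => mul_nonneg (Nat.cast_nonneg _) (le_trans zero_le_one (hs1 j)))
        (Finset.mem_univ i)
    calc (k i : ℝ) = k i * 1 := by ring
      _ ≤ k i * s i := h2
      _ ≤ wdeg s k := h3
  exact Nat.le_floor (le_trans h1 hk)

section GoodT
variable {Dr : Type}

def GoodT (S : TreeV Lp Dr d) (ES : Set (Odx Lp d)) (KS : Set (MIdx d)) (B : ℕ) :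
    ℕ → S.V → Prop
  | 0, _ => False
  | n+1, τ => ∃ l k M, τ = S.node l k M ∧ k ∈ KS ∧ Multiset.card M ≤ B ∧
      ∀ x ∈ M, x.1 ∈ ES ∧ GoodT S ES KS B n x.2

lemma finite_goodT [Finite Dr] (S : TreeV Lp Dr d) {ES : Set (Odx Lp d)}
    {KS : Set (MIdx d)} (hES : ES.Finite) (hKS : KS.Finite) (B : ℕ) :
    ∀ n, {τ : S.V | GoodT S ES KS B n τ}.Finite := by
  intro n
  induction n with
  | zero =>
    have hempty : {τ : S.V | GoodT S ES KS B 0 τ} = ∅ := by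
      ext τ
      simp [GoodT]
    rw [hempty]
    exact Set.finite_empty
  | succ n ih =>
    have hMS : {M : Multiset (Odx Lp d × S.V) | Multiset.card M ≤ B ∧
        ∀ x ∈ M, x ∈ ES ×ˢ {τ : S.V | GoodT S ES KS B n τ}}.Finite :=
      finite_multiset_subset (hES.prod ih) B
    refine Set.Finite.subset
      (((Set.finite_univ (α := Dr)).prod (hKS.prod hMS)).image
        (fun z : Dr × MIdx d × Multiset (Odx Lp d × S.V) => S.node z.1 z.2.1 z.2.2)) ?_
    rintro τ ⟨l, k, M, rfl, hk, hc, hm⟩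
    refine ⟨(l, (k, M)), ⟨trivial, hk, hc, fun x hx => ?_⟩, rfl⟩
    exact ⟨(hm x hx).1, (hm x hx).2⟩

end GoodT

lemma list_sum_map_eq {α : Type*} (l : List α) (f : α → ℝ) :
    (l.map f).sum = ∑ j : Fin l.length, f (l.get j) := by
  induction l with
  | nil => simp
  | cons a l ih =>
    rw [List.map_cons, List.sum_cons, ih]
    show _ = ∑ j : Fin (l.length + 1), f ((a :: l).get j)
    rw [Fin.sum_univ_succ]
    rfl

end Aux

/-- subcriticality implies finiteness of low-degree non-vanishing trees:
if `F` obeys `reg`, then for every `γ ∈ ℝ` and `𝔱 ∈ 𝔏₊` the set of `𝔱`-non-vanishing trees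
of `𝔰`-degree `< γ` is finite. Here `𝔇 = 𝔏₋ ⊔ {𝟎}` is encoded as `Option Lm`
with `none = 𝟎`. -/
theorem statement19
    {d : ℕ} {Lp Lm : Type} [Fintype Lp] [DecidableEq Lp] [Fintype Lm]
    (Om Op : Set (Odx Lp d))
    (hdisj : ∀ o, ¬(o ∈ Om ∧ o ∈ Op)) (hcover : ∀ o, o ∈ Om ∨ o ∈ Op)
    (s : Fin (d+1) → ℝ) (hs : ∀ i, 1 ≤ s i)
    (degL : Lp → ℝ) (hdegL : ∀ t, 0 < degL t)
    (degLm : Lm → ℝ) (hdegLm : ∀ l, degLm l < 0)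
    (regp : Lp → ℝ) (regm : Lm → ℝ)
    (hOp : ∀ o : Odx Lp d, o ∈ Op ↔ 0 < regp o.1 - wdeg s o.2)
    (hOm : ∀ o : Odx Lp d, o ∈ Om ↔ regp o.1 - wdeg s o.2 < 0)
    (hregm : ∀ l, regm l < degLm l)
    (S : TreeV Lp (Option Lm) d)
    (F : Lp → Option Lm → FnO Lp d)
    (hF : ∀ (t : Lp) (l : Option Lm),
      ∃ (m : ℕ) (α : Fin m → (Odx Lp d →₀ ℕ)) (G : Fin m → FnO Lp d),
        Function.Injective α ∧
        (∀ j, ∀ o ∈ (α j).support, o ∈ Om) ∧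
        (∀ j, IsSmoothCO (G j)) ∧
        (∀ j, G j ≠ 0) ∧
        (∀ j, DependsOnlyOn (G j) Op) ∧
        (F t l = fun x => ∑ j, G j x * Xpow (α j) x) ∧
        ∀ j, regp t < degL t + l.elim 0 regm +
          (α j).sum fun o n => (n : ℝ) * (regp o.1 - wdeg s o.2))
    (NV : Lp → S.V → Prop) (hNV : S.NVSpec F NV)
    (deg : S.V → ℝ) (hdeg : S.DegSpec s degL degLm deg) :
    ∀ (γ : ℝ) (t : Lp), {τ : S.V | NV t τ ∧ deg τ < γ}.Finite := by
  classical
  choose m αf Gf hαinj hαsupp hGsm hGne hGdep hFeq hsubc using hF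
  clear hαinj hGne
  have hOpc : ∀ o : Odx Lp d, o ∈ Op ↔ 0 < rwt regp s o := hOp
  have hOmc : ∀ o : Odx Lp d, o ∈ Om ↔ rwt regp s o < 0 := hOm
  have hcov : ∀ o : Odx Lp d, o ∈ Om ∨ o ∈ Op := hcover
  -- the subcriticality gap
  set Gaps : Finset ℝ := insert 1 ((Finset.univ : Finset (Lp × Option Lm)).biUnion fun tl =>
      (Finset.univ : Finset (Fin (m tl.1 tl.2))).image fun j =>
        degL tl.1 + (tl.2).elim 0 regm + wfw regp s (αf tl.1 tl.2 j) - regp tl.1)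
    with hGapsdef
  set ε := Gaps.min' (Finset.insert_nonempty _ _) with hεdef
  have hεmem : ε ∈ Gaps := Gaps.min'_mem (Finset.insert_nonempty _ _)
  have hε0 : 0 < ε := by
    rcases Finset.mem_insert.1 hεmem with h | h
    · rw [h]; norm_num
    · rw [Finset.mem_biUnion] at h
      obtain ⟨tl, -, h⟩ := h
      rw [Finset.mem_image] at h
      obtain ⟨j, -, h⟩ := h
      have hsj := hsubc tl.1 tl.2 j
      have hwfw : wfw regp s (αf tl.1 tl.2 j)
          = (αf tl.1 tl.2 j).sum fun o n => (n : ℝ) * (regp o.1 - wdeg s o.2) := rfl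
      rw [← h, hwfw]
      linarith
  have hgap : ∀ (t : Lp) (l : Option Lm) (j : Fin (m t l)),
      ε ≤ degL t + l.elim 0 regm + wfw regp s (αf t l j) - regp t := by
    intro t l j
    refine Finset.min'_le _ _ (Finset.mem_insert_of_mem ?_)
    rw [Finset.mem_biUnion]
    exact ⟨(t, l), Finset.mem_univ _, Finset.mem_image.2 ⟨j, Finset.mem_univ _, rfl⟩⟩
  -- the universe of negative coordinates appearing in the expansions
  set USet : Finset (Odx Lp d) := (Finset.univ : Finset (Lp × Option Lm)).biUnion fun tl =>
    (Finset.univ : Finset (Fin (m tl.1 tl.2))).biUnion fun j => (αf tl.1 tl.2 j).support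
    with hUSetdef
  -- the analytic core
  have core : ∀ (t : Lp) (l : Option Lm) (k : MIdx d) (L : List (Odx Lp d)),
      mpderiv k (Dlist L (F t l)) ≠ 0 →
      (∀ o ∈ L, o ∈ Om → o ∈ USet) ∧
      regp t + ε ≤ degL t + l.elim 0 regm + wdeg s k
        + ((L.map fun o => min (rwt regp s o) 0).sum) := by
    intro t l k L hne
    by_cases hm : m t l = 0
    · exfalso
      have hF0 : F t l = 0 := by
        rw [hFeq t l]
        funext x
        haveI : IsEmpty (Fin (m t l)) := by rw [hm]; infer_instance
        simp
      rw [hF0, Dlist_zero, mpderiv_zero] at hne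
      exact hne rfl
    · have hFina : (Finset.univ : Finset (Fin (m t l))).Nonempty :=
        ⟨⟨0, Nat.pos_of_ne_zero hm⟩, Finset.mem_univ _⟩
      set c₀ := (Finset.univ : Finset (Fin (m t l))).inf' hFina
        (fun j => wfw regp s (αf t l j)) with hc₀
      have hAdm : Adm Op Om regp s (↑USet) c₀ (F t l) := by
        refine ⟨List.ofFn (fun j => (Gf t l j, αf t l j)), ?_, ?_⟩
        · intro p hp
          rw [List.mem_ofFn] at hp
          obtain ⟨j, rfl⟩ := hp
          refine ⟨hGsm t l j, hGdep t l j, ?_, ?_, Finset.inf'_le _ (Finset.mem_univ _)⟩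
          · intro o ho
            refine Finset.mem_coe.2 (Finset.mem_biUnion.2 ⟨(t, l), Finset.mem_univ _,
              Finset.mem_biUnion.2 ⟨j, Finset.mem_univ _, ?_⟩⟩)
            simpa using ho
          · intro o ho
            exact hαsupp t l j o (by simpa using ho)
        · rw [hFeq t l]
          funext x
          show (∑ j, Gf t l j x * Xpow (αf t l j) x) = _
          rw [show sumf (List.ofFn fun j => (Gf t l j, αf t l j)) x
            = ((List.ofFn fun j => (Gf t l j, αf t l j)).map
                fun p => p.1 x * Xpow p.2 x).sum from rfl]
          rw [List.map_ofFn, List.sum_ofFn]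
          rfl
      constructor
      · intro o hoL hoOm
        by_contra hoU
        obtain ⟨L1, L2, rfl⟩ := List.append_of_mem hoL
        have hA2 := hAdm.dlist hOpc hOmc hcov L2
        have hop : o ∉ Op := by
          intro hop
          have h1 := (hOp o).1 hop
          have h2 := (hOm o).1 hoOm
          linarith
        have hz := hA2.dpart_eq_zero hop (by simpa using hoU)
        have hsplit : Dlist (L1 ++ o :: L2) (F t l)
            = Dlist L1 (Dpart o (Dlist L2 (F t l))) := by
          show List.foldr Dpart (F t l) (L1 ++ o :: L2) = _
          rw [List.foldr_append]
          rfl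
        rw [hsplit, hz, Dlist_zero, mpderiv_zero] at hne
        exact hne rfl
      · have h1 := hAdm.dlist hOpc hOmc hcov L
        have h2 := (h1.mono (Set.subset_univ _) le_rfl).mpderiv hOpc hOmc hcov hs k
        have h3 : c₀ - (L.map fun o => min (rwt regp s o) 0).sum - wdeg s k ≤ 0 :=
          h2.c_nonpos (fun o ho => (hOm o).1 ho) hne
        obtain ⟨j, -, hj⟩ := Finset.exists_mem_eq_inf' hFina (fun j => wfw regp s (αf t l j))
        have h4 := hgap t l j
        have h5 : c₀ = wfw regp s (αf t l j) := by rw [hc₀, hj]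
        linarith
  -- claim 1 : non-vanishing trees have degree above regp t - degL t
  have claim1 : ∀ τ : S.V, ∀ t : Lp, NV t τ → regp t - degL t + ε ≤ deg τ := by
    refine S.ind (fun τ => ∀ t, NV t τ → regp t - degL t + ε ≤ deg τ) ?_
    intro l k M IH t ht
    rw [show S.node l k M = S.node l k (↑M.toList) by rw [Multiset.coe_toList]] at ht
    rw [hNV t l k M.toList] at ht
    obtain ⟨hder, hch⟩ := ht
    obtain ⟨-, hineq⟩ := core t l k (M.toList.map Prod.fst) hder
    have hdegτ := hdeg l k M
    have helim : l.elim 0 regm ≤ l.elim 0 degLm := by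
      cases l with
      | none => exact le_rfl
      | some l' => exact (hregm l').le
    have hLsum : ((M.toList.map Prod.fst).map fun o => min (rwt regp s o) 0).sum
        ≤ ((M.map fun x => degL x.1.1 - wdeg s x.1.2 + deg x.2)).sum := by
      have h1 : (M.map fun x => degL x.1.1 - wdeg s x.1.2 + deg x.2).sum
          = ((M.toList.map fun x => degL x.1.1 - wdeg s x.1.2 + deg x.2)).sum := by
        conv_lhs => rw [← Multiset.coe_toList M]
        rw [Multiset.map_coe, Multiset.sum_coe]
      rw [h1, List.map_map]
      refine List.sum_le_sum fun x hx => ?_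
      have hxM : x ∈ M := Multiset.mem_toList.1 hx
      have hNVx : NV x.1.1 x.2 := by
        obtain ⟨jx, hjx⟩ := List.mem_iff_get.1 hx
        have hj2 := hch jx
        rw [hjx] at hj2
        exact hj2
      have hIH := IH x hxM x.1.1 hNVx
      show min (rwt regp s x.1) 0 ≤ degL x.1.1 - wdeg s x.1.2 + deg x.2
      have hrwt : rwt regp s x.1 = regp x.1.1 - wdeg s x.1.2 := rfl
      have hminle : min (rwt regp s x.1) 0 ≤ rwt regp s x.1 := min_le_left _ _
      linarith
    rw [hdegτ]
    linarith
  intro γ t0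
  -- finite universe of allowed edge decorations
  set RB : ℝ := Finset.univ.sup' ⟨t0, Finset.mem_univ t0⟩ regp with hRB
  set ES : Set (Odx Lp d) := ↑USet ∪ {o : Odx Lp d | o ∈ Op ∧ wdeg s o.2 < regp o.1}
    with hESdef
  have hESfin : ES.Finite := by
    refine Set.Finite.union (USet.finite_toSet) ?_
    refine Set.Finite.subset (Set.Finite.prod (Set.finite_univ (α := Lp))
      (finite_wdeg_le hs RB)) ?_
    rintro o ⟨-, ho2⟩
    refine Set.mem_prod.2 ⟨trivial, ?_⟩
    exact le_trans ho2.le (Finset.le_sup' regp (Finset.mem_univ o.1))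
  -- minimal constants
  set rminF : Finset ℝ := insert 0 (hESfin.toFinset.image fun o => min (rwt regp s o) 0)
    with hrminF
  set rmin : ℝ := rminF.min' (Finset.insert_nonempty _ _) with hrmindef
  have hrmin0 : rmin ≤ 0 := Finset.min'_le _ _ (Finset.mem_insert_self _ _)
  have hrminle : ∀ o ∈ ES, rmin ≤ min (rwt regp s o) 0 := fun o ho =>
    Finset.min'_le _ _ (Finset.mem_insert_of_mem (Finset.mem_image.2
      ⟨o, hESfin.mem_toFinset.2 ho, rfl⟩))
  set eminF : Finset ℝ := insert 0 ((Finset.univ : Finset Lm).image regm) with heminF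
  set emin : ℝ := eminF.min' (Finset.insert_nonempty _ _) with hemindef
  have hemin : ∀ l : Option Lm, emin ≤ l.elim 0 regm := by
    intro l
    cases l with
    | none => exact Finset.min'_le _ _ (Finset.mem_insert_self _ _)
    | some l' => exact Finset.min'_le _ _ (Finset.mem_insert_of_mem
        (Finset.mem_image.2 ⟨l', Finset.mem_univ _, rfl⟩))
  set Cmax : ℝ := Finset.univ.sup' ⟨t0, Finset.mem_univ t0⟩ (fun t => regp t - degL t)
    with hCmaxdef
  have hCmax : ∀ t, regp t - degL t ≤ Cmax := fun t =>
    Finset.le_sup' (fun t => regp t - degL t) (Finset.mem_univ t)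
  set N : ℕ := ⌈(γ - (regp t0 - degL t0)) / ε⌉₊ with hNdef
  have hγN : γ ≤ (regp t0 - degL t0) + ε * ((N : ℝ) + 1) := by
    have h1 := Nat.le_ceil ((γ - (regp t0 - degL t0)) / ε)
    rw [div_le_iff₀ hε0] at h1
    rw [← hNdef] at h1
    have h2 : ε * ((N : ℝ) + 1) = (N : ℝ) * ε + ε := by ring
    linarith
  set W : ℝ := Cmax + ε * ((N : ℝ) + 1) - emin - (N : ℝ) * rmin with hWdef
  set KS : Set (MIdx d) := {k : MIdx d | wdeg s k ≤ W} with hKSdef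
  have hKSfin : KS.Finite := finite_wdeg_le hs W
  -- claim 2 : recursion bound
  have claim2 : ∀ τ : S.V, ∀ (n : ℕ) (t : Lp), n ≤ N → NV t τ →
      deg τ < (regp t - degL t) + ε * ((n : ℝ) + 1) → GoodT S ES KS N n τ := by
    refine S.ind (fun τ => ∀ (n : ℕ) (t : Lp), n ≤ N → NV t τ →
      deg τ < (regp t - degL t) + ε * ((n : ℝ) + 1) → GoodT S ES KS N n τ) ?_
    intro l k M IH n t hnN ht hdlt
    rw [show S.node l k M = S.node l k (↑M.toList) by rw [Multiset.coe_toList]] at ht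
    rw [hNV t l k M.toList] at ht
    obtain ⟨hder, hch⟩ := ht
    obtain ⟨hsupE, hineq⟩ := core t l k (M.toList.map Prod.fst) hder
    have hdegτ := hdeg l k M
    have helim : l.elim 0 regm ≤ l.elim 0 degLm := by
      cases l with
      | none => exact le_rfl
      | some l' => exact (hregm l').le
    -- index bookkeeping
    set len := M.toList.length with hlen
    set g : Fin len → ℝ := fun j => degL (M.toList.get j).1.1
      - wdeg s (M.toList.get j).1.2 + deg (M.toList.get j).2 with hgdef
    set mn : Fin len → ℝ := fun j => min (rwt regp s (M.toList.get j).1) 0 with hmndef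
    have hsum1 : (M.map fun x => degL x.1.1 - wdeg s x.1.2 + deg x.2).sum = ∑ j, g j := by
      conv_lhs => rw [← Multiset.coe_toList M]
      rw [Multiset.map_coe, Multiset.sum_coe, list_sum_map_eq]
    have hsum2 : ((M.toList.map Prod.fst).map fun o => min (rwt regp s o) 0).sum
        = ∑ j, mn j := by
      rw [List.map_map, list_sum_map_eq]
      rfl
    rw [hsum2] at hineq
    rw [hdegτ, hsum1] at hdlt
    -- edges belong to ES
    have hedge : ∀ j : Fin len, (M.toList.get j).1 ∈ ES := by
      intro j
      rcases hcov (M.toList.get j).1 with hom | hop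
      · refine Set.mem_union_left _ (Finset.mem_coe.2 ?_)
        refine hsupE (M.toList.get j).1 ?_ hom
        exact List.mem_map.2 ⟨M.toList.get j, List.mem_iff_get.2 ⟨j, rfl⟩, rfl⟩
      · refine Set.mem_union_right _ ⟨hop, ?_⟩
        have h0 := (hOp (M.toList.get j).1).1 hop
        linarith
    -- per-child inequalities
    have hNVj : ∀ j : Fin len, NV (M.toList.get j).1.1 (M.toList.get j).2 := fun j => hch j
    have hgj : ∀ j : Fin len, g j = degL (M.toList.get j).1.1
        - wdeg s (M.toList.get j).1.2 + deg (M.toList.get j).2 := fun j => rfl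
    have hmnj : ∀ j : Fin len, mn j ≤ regp (M.toList.get j).1.1
        - wdeg s (M.toList.get j).1.2 := fun j => min_le_left _ _
    have hmn0 : ∀ j : Fin len, mn j ≤ 0 := fun j => min_le_right _ _
    have hge : ∀ j : Fin len, mn j + ε ≤ g j := by
      intro j
      have hIH := claim1 (M.toList.get j).2 (M.toList.get j).1.1 (hNVj j)
      have h1 := hgj j
      have h2 := hmnj j
      linarith
    have hsumge : (∑ j, mn j) + (len : ℝ) * ε ≤ ∑ j, g j := by
      have h1 : ∀ j ∈ (Finset.univ : Finset (Fin len)), mn j + ε ≤ g j := fun j _ => hge j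
      have h2 := Finset.sum_le_sum h1
      rw [Finset.sum_add_distrib] at h2
      simp only [Finset.sum_const, Finset.card_univ, Fintype.card_fin, nsmul_eq_mul] at h2
      linarith
    -- base bound
    have hlow : (regp t - degL t) + ε * ((len : ℝ) + 1) ≤ l.elim 0 degLm + wdeg s k
        + ∑ j, g j := by
      have hexp : ε * ((len : ℝ) + 1) = (len : ℝ) * ε + ε := by ring
      linarith
    have hlenN : len < n := by
      by_contra hcon
      push_neg at hcon
      have h1 : (n : ℝ) + 1 ≤ (len : ℝ) + 1 := by
        have : (n : ℝ) ≤ (len : ℝ) := by exact_mod_cast hcon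
        linarith
      have h2 := mul_le_mul_of_nonneg_left h1 hε0.le
      linarith
    cases n with
    | zero => exact absurd hlenN (by omega)
    | succ n' =>
      have hcardlen : Multiset.card M = len := (Multiset.length_toList M).symm
      have hcard : Multiset.card M ≤ N := by omega
      have hkKS : k ∈ KS := by
        show wdeg s k ≤ W
        have hsumrmin : (N : ℝ) * rmin ≤ ∑ j, g j := by
          have h1 : ∀ j ∈ (Finset.univ : Finset (Fin len)), rmin ≤ g j := by
            intro j _
            have h2 := hrminle _ (hedge j)
            have h3 := hge j
            linarith
          have h2 := Finset.sum_le_sum h1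
          simp only [Finset.sum_const, Finset.card_univ, Fintype.card_fin, nsmul_eq_mul] at h2
          have h4 : (N : ℝ) * rmin ≤ (len : ℝ) * rmin := by
            have h5 : (len : ℝ) ≤ (N : ℝ) := by
              have : len ≤ N := by omega
              exact_mod_cast this
            nlinarith
          linarith
        have hem := hemin l
        have hmono : ε * (((n' : ℕ) : ℝ) + 1 + 1) ≤ ε * ((N : ℝ) + 1) := by
          have h5 : ((n' : ℕ) : ℝ) + 1 + 1 ≤ (N : ℝ) + 1 := by
            have h6 : ((n' + 1 : ℕ) : ℝ) ≤ (N : ℝ) := by exact_mod_cast hnN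
            push_cast at h6
            linarith
          exact mul_le_mul_of_nonneg_left h5 hε0.le
        have hCt := hCmax t
        push_cast at hdlt
        rw [hWdef]
        linarith
      refine ⟨l, k, M, rfl, hkKS, hcard, ?_⟩
      intro x hx
      obtain ⟨jx, hjx⟩ := List.mem_iff_get.1 (Multiset.mem_toList.2 hx)
      constructor
      · rw [← hjx]; exact hedge jx
      · have hsingle : g jx - mn jx ≤ (∑ j, g j) - ∑ j, mn j := by
          have h1 : ∀ j ∈ (Finset.univ : Finset (Fin len)), 0 ≤ g j - mn j := by
            intro j _
            have h2 := hge j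
            linarith
          have h2 := Finset.single_le_sum h1 (Finset.mem_univ jx)
          rw [Finset.sum_sub_distrib] at h2
          exact h2
        have hgc : deg x.2 - (regp x.1.1 - degL x.1.1) ≤ g jx - mn jx := by
          have h1 := hgj jx
          have h2 := hmnj jx
          rw [hjx] at h1 h2
          linarith
        have hxlt : deg x.2 < (regp x.1.1 - degL x.1.1) + ε * ((n' : ℝ) + 1) := by
          have hexp : ε * (((n' : ℕ) : ℝ) + 1 + 1) - ε = ε * (((n' : ℕ) : ℝ) + 1) := by
            ring
          push_cast at hdlt
          linarith
        refine IH x hx n' x.1.1 (by omega) ?_ hxlt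
        rw [← hjx]
        exact hNVj jx
  refine Set.Finite.subset (finite_goodT S hESfin hKSfin N N) ?_
  rintro τ ⟨h1, h2⟩
  exact claim2 τ N t0 le_rfl h1 (lt_of_lt_of_le h2 hγN)

end SPDERenorm
end
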